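/- arXiv:math/0411422 — 9 statements merged into one kernel-verified Lean document; each statement's English description precedes it below -/
import Mathlib

section
/- Let R be a commutative Noetherian ring with unity and let I be a regular ideal of R (an ideal containing a nonzerodivisor). Then the set Ĩ = ⋃_{k≥1} (I^{k+1} : I^k) is an ideal of R containing I, the ideals I^{k+1} : I^k increase with k and Ĩ = I^{k+1} : I^k for all sufficiently large k, (Ĩ)^n = I^n for all sufficiently large n, and Ĩ is the unique largest ideal with this property: if J is any ideal of R with J^n = I^n for all sufficiently large n, then J ⊆ Ĩ. -/
open Polynomial

/-- The Ratliff-Rush closure set `⋃_{k ≥ 1} (I^{k+1} : I^k)`. -/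
def rrSet {R : Type*} [CommRing R] (I : Ideal R) : Set R :=
  ⋃ k ∈ Set.Ici (1 : ℕ), ((I ^ (k + 1)).colon ((I ^ k : Ideal R) : Set R) : Set R)

namespace RRAux

variable {R : Type*} [CommRing R]

lemma smul_pow_le {I : Ideal R} {u : R} {k : ℕ}
    (hu : u ∈ (I ^ (k + 1)).colon ((I ^ k : Ideal R) : Set R)) {m : ℕ} (hm : k ≤ m) :
    Ideal.span {u} * I ^ m ≤ I ^ (m + 1) := by
  have h1 : Ideal.span {u} * I ^ k ≤ I ^ (k + 1) := by
    rw [Ideal.span_singleton_mul_le_iff]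
    intro y hy
    exact Submodule.mem_colon.mp hu y hy
  have hIm : I ^ m = I ^ (m - k) * I ^ k := by
    rw [← pow_add, Nat.sub_add_cancel hm]
  have hIm1 : I ^ (m - k) * I ^ (k + 1) = I ^ (m + 1) := by
    rw [← pow_add]; congr 1; omega
  calc Ideal.span {u} * I ^ m = I ^ (m - k) * (Ideal.span {u} * I ^ k) := by
        rw [hIm]; ring
    _ ≤ I ^ (m - k) * I ^ (k + 1) := Ideal.mul_mono le_rfl h1
    _ = I ^ (m + 1) := hIm1

lemma pow_smul_pow_le {I : Ideal R} {u : R} {k : ℕ}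
    (hu : u ∈ (I ^ (k + 1)).colon ((I ^ k : Ideal R) : Set R)) (j : ℕ) {m : ℕ} (hm : k ≤ m) :
    Ideal.span {u ^ j} * I ^ m ≤ I ^ (m + j) := by
  induction j with
  | zero => simp
  | succ j ih =>
    have h1 : Ideal.span {u ^ (j + 1)} ≤ Ideal.span {u} * Ideal.span {u ^ j} := by
      rw [Ideal.span_singleton_mul_span_singleton]
      rw [Ideal.span_singleton_le_span_singleton]
      exact ⟨1, by ring⟩
    calc Ideal.span {u ^ (j + 1)} * I ^ m
        ≤ (Ideal.span {u} * Ideal.span {u ^ j}) * I ^ m := Ideal.mul_mono h1 le_rfl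
      _ = Ideal.span {u} * (Ideal.span {u ^ j} * I ^ m) := by ring
      _ ≤ Ideal.span {u} * I ^ (m + j) := Ideal.mul_mono le_rfl ih
      _ ≤ I ^ (m + j + 1) := smul_pow_le hu (by omega)

lemma sum_ideal_le {ι : Type*} (s : Finset ι) (f : ι → Ideal R) {J : Ideal R}
    (h : ∀ i ∈ s, f i ≤ J) : (∑ i ∈ s, f i) ≤ J := by
  classical
  induction s using Finset.induction_on with
  | empty => simp
  | insert a s hx ih =>
    rw [Finset.sum_insert hx, Submodule.add_eq_sup]
    exact sup_le (h _ (Finset.mem_insert_self _ _))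
      (ih fun i hi => h i (Finset.mem_insert_of_mem hi))

lemma le_sum_of_mem {ι : Type*} {s : Finset ι} {f : ι → Ideal R} {j : ι} (hj : j ∈ s) :
    f j ≤ ∑ i ∈ s, f i := by
  classical
  rw [← Finset.add_sum_erase s f hj, Submodule.add_eq_sup]
  exact le_sup_left

lemma add_pow_le_sum (A B : Ideal R) (n : ℕ) :
    (A + B) ^ n ≤ ∑ i ∈ Finset.range (n + 1), A ^ i * B ^ (n - i) := by
  induction n with
  | zero => simp
  | succ n ih =>
    have h1 : (A + B) ^ (n + 1) ≤ (∑ i ∈ Finset.range (n + 1), A ^ i * B ^ (n - i)) * (A + B) := by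
      rw [pow_succ]; exact Ideal.mul_mono ih le_rfl
    refine h1.trans ?_
    rw [mul_add, Finset.sum_mul, Finset.sum_mul, Submodule.add_eq_sup]
    apply sup_le
    · apply sum_ideal_le
      intro i hi
      have hi' : i < n + 1 := Finset.mem_range.mp hi
      have he : A ^ i * B ^ (n - i) * A = A ^ (i + 1) * B ^ ((n + 1) - (i + 1)) := by
        rw [Nat.succ_sub_succ]; ring
      rw [he]
      exact le_sum_of_mem (f := fun j => A ^ j * B ^ (n + 1 - j))
        (Finset.mem_range.mpr (by omega))
    · apply sum_ideal_le
      intro i hi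
      have hi' : i < n + 1 := Finset.mem_range.mp hi
      have he : A ^ i * B ^ (n - i) * B = A ^ i * B ^ ((n + 1) - i) := by
        rw [mul_assoc, ← pow_succ]
        congr 2
        omega
      rw [he]
      exact le_sum_of_mem (f := fun j => A ^ j * B ^ (n + 1 - j))
        (Finset.mem_range.mpr (by omega))

lemma key [IsNoetherianRing R] {I : Ideal R} {u x : R} (hx : x ∈ I)
    (hxreg : x ∈ nonZeroDivisors R) {k : ℕ}
    (hu : u ∈ (I ^ (k + 1)).colon ((I ^ k : Ideal R) : Set R)) :
    ∃ d : ℕ, ∀ n, k + d ≤ n → ∀ i ≤ n, ∀ b ∈ I ^ (n - i), u ^ i * b ∈ I ^ n := by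
  haveI : Module.Finite R (I ^ k : Ideal R) :=
    Module.Finite.iff_fg.mpr (IsNoetherian.noetherian _)
  set f : Module.End R (I ^ k : Ideal R) := algebraMap R _ u with hf
  have hrange : LinearMap.range f ≤ I • (⊤ : Submodule R (I ^ k : Ideal R)) := by
    rintro _ ⟨m, rfl⟩
    rw [Submodule.mem_smul_top_iff]
    have h2 : ((f m : (I ^ k : Ideal R)) : R) = u * (m : R) := rfl
    rw [h2, Ideal.smul_eq_mul]
    have h3 : u * (m : R) ∈ I ^ (k + 1) := Submodule.mem_colon.mp hu _ m.2
    have h4 : (I : Ideal R) * I ^ k = I ^ (k + 1) := by rw [← pow_succ']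
    rw [h4]
    exact h3
  obtain ⟨p, hp, -, hcoeff, heval⟩ :=
    LinearMap.exists_monic_and_coeff_mem_pow_and_aeval_eq_zero_of_range_le_smul R f I hrange
  have hpu : p.eval u = 0 := by
    have h5 : Polynomial.aeval f p = 0 := heval
    rw [hf, aeval_algebraMap_apply_eq_algebraMap_eval] at h5
    have hξ : (x ^ k : R) ∈ I ^ k := Ideal.pow_mem_pow hx k
    have h6 : (algebraMap R (Module.End R (I ^ k : Ideal R)) (p.eval u)) ⟨x ^ k, hξ⟩ = 0 := by
      rw [h5]; rfl
    have h7 : p.eval u * x ^ k = 0 := by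
      have := congrArg (Subtype.val) h6
      simpa using this
    have hxk : (x ^ k : R) ∈ nonZeroDivisors R := pow_mem hxreg k
    exact (mul_right_mem_nonZeroDivisors_eq_zero_iff hxk).mp h7
  set d := p.natDegree with hd
  by_cases hd0 : d = 0
  · have hpone : p = 1 := (Polynomial.Monic.natDegree_eq_zero hp).mp hd0
    have hone : (1 : R) = 0 := by rw [hpone] at hpu; simpa using hpu
    refine ⟨0, fun n _ i _ b _ => ?_⟩
    have : u ^ i * b = 0 := by
      calc u ^ i * b = (u ^ i * b) * 1 := (mul_one _).symm
        _ = (u ^ i * b) * 0 := by rw [hone]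
        _ = 0 := mul_zero _
    rw [this]; exact (I ^ n).zero_mem
  · have hud : u ^ d = ∑ j ∈ Finset.range d, -(p.coeff j * u ^ j) := by
      have he : p.eval u = ∑ i ∈ Finset.range (d + 1), p.coeff i * u ^ i :=
        Polynomial.eval_eq_sum_range _
      rw [Finset.sum_range_succ, hp.coeff_natDegree, one_mul, hpu] at he
      have h8 : u ^ d = -∑ j ∈ Finset.range d, p.coeff j * u ^ j :=
        eq_neg_of_add_eq_zero_right he.symm
      rw [h8]
      simp
    refine ⟨d, ?_⟩
    intro n hn
    have main : ∀ i, ∀ b, i ≤ n → b ∈ I ^ (n - i) → u ^ i * b ∈ I ^ n := by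
      intro i
      induction i using Nat.strong_induction_on with
      | _ i IH =>
        intro b hin hb
        by_cases hcase : i + k ≤ n
        · have h1 : u ^ i * b ∈ Ideal.span {u ^ i} * I ^ (n - i) :=
            Ideal.mul_mem_mul (Ideal.mem_span_singleton_self _) hb
          have h2 : Ideal.span {u ^ i} * I ^ (n - i) ≤ I ^ ((n - i) + i) :=
            pow_smul_pow_le hu i (by omega)
          have h3 : (n - i) + i = n := by omega
          rw [← h3]
          exact h2 h1
        · have hid : d ≤ i := by omega
          have h3 : u ^ i = u ^ (i - d) * u ^ d := by rw [← pow_add]; congr 1; omega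
          have hexp : u ^ i * b = ∑ j ∈ Finset.range d, u ^ (i - d + j) * (-(p.coeff j) * b) := by
            rw [h3, hud, Finset.mul_sum, Finset.sum_mul]
            apply Finset.sum_congr rfl
            intro j hj
            rw [pow_add]
            ring
          rw [hexp]
          apply Submodule.sum_mem
          intro j hj
          have hj' : j < d := Finset.mem_range.mp hj
          refine IH (i - d + j) (by omega) _ (by omega) ?_
          have hc : p.coeff j ∈ I ^ (d - j) := hcoeff j
          have h4 : -(p.coeff j) * b ∈ I ^ (d - j) * I ^ (n - i) :=
            Ideal.mul_mem_mul (neg_mem hc) hb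
          rw [← pow_add] at h4
          have harith : (d - j) + (n - i) = n - (i - d + j) := by omega
          rwa [harith] at h4
    exact fun i hi b hb => main i b hi hb

lemma pow_eq_of_colon [IsNoetherianRing R] {I : Ideal R} {u x : R} (hx : x ∈ I)
    (hxreg : x ∈ nonZeroDivisors R) {k : ℕ}
    (hu : u ∈ (I ^ (k + 1)).colon ((I ^ k : Ideal R) : Set R)) :
    ∃ M : ℕ, ∀ n, M ≤ n → (I + Ideal.span {u}) ^ n = I ^ n := by
  obtain ⟨d, hkey⟩ := key hx hxreg hu
  refine ⟨k + d, fun n hn => le_antisymm ?_ ?_⟩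
  · refine (add_pow_le_sum I (Ideal.span {u}) n).trans ?_
    apply sum_ideal_le
    intro i hi
    have hi' : i < n + 1 := Finset.mem_range.mp hi
    rw [Ideal.span_singleton_pow, Ideal.mul_le]
    intro a ha y hy
    obtain ⟨c, hc⟩ := Ideal.mem_span_singleton'.mp hy
    have he : a * y = u ^ (n - i) * (c * a) := by rw [← hc]; ring
    rw [he]
    refine hkey n hn (n - i) (by omega) (c * a) ?_
    have h2 : n - (n - i) = i := by omega
    rw [h2]
    exact Ideal.mul_mem_left _ c ha
  · have h3 : I ≤ I + Ideal.span {u} := by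
      rw [Submodule.add_eq_sup]; exact le_sup_left
    exact Ideal.pow_right_mono h3 n

lemma J_add {I J₁ J₂ : Ideal R} (h1 : ∃ N, ∀ n, N ≤ n → J₁ ^ n = I ^ n)
    (h2 : ∃ N, ∀ n, N ≤ n → J₂ ^ n = I ^ n) :
    ∃ N, ∀ n, N ≤ n → (J₁ + J₂) ^ n = I ^ n := by
  obtain ⟨N₁, h1⟩ := h1
  obtain ⟨N₂, h2⟩ := h2
  refine ⟨2 * (N₁ + N₂) + 1, fun n hn => le_antisymm ?_ ?_⟩
  · refine (add_pow_le_sum J₁ J₂ n).trans (sum_ideal_le _ _ fun i hi => ?_)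
    have hi' : i < n + 1 := Finset.mem_range.mp hi
    by_cases hcase : N₁ + N₂ ≤ i
    · refine le_of_eq ?_
      calc J₁ ^ i * J₂ ^ (n - i) = J₂ ^ i * J₂ ^ (n - i) := by
            rw [h1 i (by omega), h2 i (by omega)]
        _ = J₂ ^ n := by rw [← pow_add]; congr 1; omega
        _ = I ^ n := h2 n (by omega)
    · refine le_of_eq ?_
      calc J₁ ^ i * J₂ ^ (n - i) = J₁ ^ i * J₁ ^ (n - i) := by
            rw [h2 (n - i) (by omega), h1 (n - i) (by omega)]
        _ = J₁ ^ n := by rw [← pow_add]; congr 1; omega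
        _ = I ^ n := h1 n (by omega)
  · rw [← h1 n (by omega)]
    exact Ideal.pow_right_mono (by rw [Submodule.add_eq_sup]; exact le_sup_left) n

lemma subset_rrSet {I J : Ideal R} (h : ∃ N, ∀ n, N ≤ n → J ^ n = I ^ n) :
    (J : Set R) ⊆ rrSet I := by
  obtain ⟨N, hN⟩ := h
  intro u hu
  have h1 : 1 ≤ max N 1 := le_max_right _ _
  have hNm : N ≤ max N 1 := le_max_left _ _
  set m := max N 1 with hm
  have hmem : u ∈ (I ^ (m + 1)).colon ((I ^ m : Ideal R) : Set R) := by
    rw [Submodule.mem_colon]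
    intro p hp
    have h2 : u * p ∈ J * I ^ m := Ideal.mul_mem_mul hu hp
    have h3 : J * I ^ m = I ^ (m + 1) := by
      rw [← hN m hNm, ← pow_succ', hN (m + 1) (by omega)]
    rw [smul_eq_mul, ← h3]
    exact h2
  exact Set.mem_biUnion (show m ∈ Set.Ici 1 from h1) hmem

lemma colon_mono (I : Ideal R) :
    ∀ k l : ℕ, 1 ≤ k → k ≤ l → (I ^ (k + 1)).colon ((I ^ k : Ideal R) : Set R) ≤ (I ^ (l + 1)).colon ((I ^ l : Ideal R) : Set R) := by
  intro k l _ hkl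
  induction l, hkl using Nat.le_induction with
  | base => exact le_rfl
  | succ l hl ih =>
    refine ih.trans ?_
    intro u hu
    rw [Submodule.mem_colon]
    intro p hp
    rw [smul_eq_mul]
    exact smul_pow_le hu (Nat.le_succ l)
      (Ideal.mul_mem_mul (Ideal.mem_span_singleton_self u) hp)

end RRAux



/-- For a regular ideal `I` in a commutative Noetherian ring `R`, the set
`Ĩ = ⋃_{k≥1} (I^{k+1} : I^k)` is an ideal containing `I`, the colon ideals increase with `k`
and stabilize to `Ĩ`, `(Ĩ)^n = I^n` for all large `n`, and `Ĩ` is the unique largest ideal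
with this property. -/
theorem stmt0 {R : Type*} [CommRing R] [IsNoetherianRing R] (I : Ideal R)
    (hreg : ∃ x ∈ I, x ∈ nonZeroDivisors R) :
    (∀ k l : ℕ, 1 ≤ k → k ≤ l → (I ^ (k + 1)).colon ((I ^ k : Ideal R) : Set R) ≤ (I ^ (l + 1)).colon ((I ^ l : Ideal R) : Set R)) ∧
    (∃ N : ℕ, 1 ≤ N ∧ ∀ k : ℕ, N ≤ k →
      ((I ^ (k + 1)).colon ((I ^ k : Ideal R) : Set R) : Set R) = rrSet I) ∧
    (∃ J : Ideal R, (J : Set R) = rrSet I ∧ I ≤ J ∧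
      (∃ N : ℕ, ∀ n : ℕ, N ≤ n → J ^ n = I ^ n) ∧
      (∀ J' : Ideal R, (∃ N : ℕ, ∀ n : ℕ, N ≤ n → J' ^ n = I ^ n) →
        (J' : Set R) ⊆ rrSet I)) := by
  obtain ⟨x, hxI, hxreg⟩ := hreg
  refine ⟨RRAux.colon_mono I, ?_, ?_⟩
  · -- stabilization
    set F : ℕ →o Ideal R :=
      ⟨fun m => (I ^ (m + 1 + 1)).colon ((I ^ (m + 1) : Ideal R) : Set R),
       fun a b hab => RRAux.colon_mono I (a + 1) (b + 1) (by omega) (by omega)⟩ with hF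
    obtain ⟨n₀, hstab⟩ := (monotone_stabilizes_iff_noetherian.mpr inferInstance) F
    refine ⟨n₀ + 1, by omega, ?_⟩
    intro k hk
    obtain ⟨t, rfl⟩ : ∃ t, k = (n₀ + t) + 1 := ⟨k - n₀ - 1, by omega⟩
    apply Set.Subset.antisymm
    · intro y hy
      exact Set.mem_biUnion (show (n₀ + t) + 1 ∈ Set.Ici 1 by simp) hy
    · intro y hy
      simp only [rrSet, Set.mem_iUnion, Set.mem_Ici, SetLike.mem_coe] at hy
      obtain ⟨j, hj, hyj⟩ := hy
      by_cases hjk : j ≤ (n₀ + t) + 1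
      · exact RRAux.colon_mono I j ((n₀ + t) + 1) hj hjk hyj
      · obtain ⟨s, rfl⟩ : ∃ s, j = (n₀ + s) + 1 := ⟨j - n₀ - 1, by omega⟩
        have e : F (n₀ + t) = F (n₀ + s) :=
          (hstab (n₀ + t) (by omega)).symm.trans (hstab (n₀ + s) (by omega))
        have e' : (I ^ ((n₀ + t) + 1 + 1)).colon ((I ^ ((n₀ + t) + 1) : Ideal R) : Set R)
            = (I ^ ((n₀ + s) + 1 + 1)).colon ((I ^ ((n₀ + s) + 1) : Ideal R) : Set R) := e
        show y ∈ (I ^ ((n₀ + t) + 1 + 1)).colon ((I ^ ((n₀ + t) + 1) : Ideal R) : Set R)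
        rw [e']
        exact hyj
  · have hIS : I ∈ {J : Ideal R | ∃ N, ∀ n, N ≤ n → J ^ n = I ^ n} :=
      ⟨0, fun n _ => rfl⟩
    obtain ⟨Js, hJsS, hmax⟩ := (set_has_maximal_iff_noetherian.mpr inferInstance)
      {J : Ideal R | ∃ N, ∀ n, N ≤ n → J ^ n = I ^ n} ⟨I, hIS⟩
    have hle : ∀ J : Ideal R, (∃ N, ∀ n, N ≤ n → J ^ n = I ^ n) → J ≤ Js := by
      intro J hJ
      have hsum : Js + J ∈ {J : Ideal R | ∃ N, ∀ n, N ≤ n → J ^ n = I ^ n} :=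
        RRAux.J_add hJsS hJ
      have h3 : Js ≤ Js + J := by rw [Submodule.add_eq_sup]; exact le_sup_left
      have h4 : Js + J = Js := by
        by_contra hne
        exact hmax _ hsum (lt_of_le_of_ne h3 (fun h => hne h.symm))
      calc J ≤ Js + J := by rw [Submodule.add_eq_sup]; exact le_sup_right
        _ = Js := h4
    refine ⟨Js, ?_, hle I hIS, hJsS, fun J' hJ' => RRAux.subset_rrSet hJ'⟩
    apply Set.Subset.antisymm (RRAux.subset_rrSet hJsS)
    intro u hu
    simp only [rrSet, Set.mem_iUnion, Set.mem_Ici, SetLike.mem_coe] at hu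
    obtain ⟨k, hk1, huk⟩ := hu
    have hmem : ∃ N, ∀ n, N ≤ n → (I + Ideal.span {u}) ^ n = I ^ n :=
      RRAux.pow_eq_of_colon hxI hxreg huk
    have humem : u ∈ I + Ideal.span {u} := by
      rw [Submodule.add_eq_sup]
      exact Submodule.mem_sup_right (Ideal.mem_span_singleton_self u)
    exact hle _ hmem humem
end

section
/- Let R and S be commutative Noetherian rings such that R is a faithfully flat S-algebra, and let I ⊂ S be a regular ideal. Then the extended ideal IR is Ratliff-Rush closed in R if and only if I is Ratliff-Rush closed in S. -/
/-- An ideal is Ratliff-Rush closed if it equals its Ratliff-Rush closure. -/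
def IsRatliffRushClosed {R : Type*} [CommRing R] (I : Ideal R) : Prop :=
  rrSet I = (I : Set R)

open TensorProduct

section flatlemmas

variable {S R : Type*} [CommRing S] [CommRing R] [Algebra S R]

lemma mk_eq_zero_iff_mem_map (J : Ideal S) (x : R) :
    (Submodule.Quotient.mk x : R ⧸ (J • (⊤ : Submodule S R))) = 0 ↔
      x ∈ J.map (algebraMap S R) := by
  rw [Submodule.Quotient.mk_eq_zero, Ideal.smul_top_eq_map, Submodule.restrictScalars_mem]

lemma tmul_mk_one_eq_zero_iff (J : Ideal S) (r : R) :
    (r ⊗ₜ[S] (Submodule.Quotient.mk 1 : S ⧸ (J : Submodule S S))) = 0 ↔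
      r ∈ J.map (algebraMap S R) := by
  rw [show (Submodule.Quotient.mk (1 : S) : S ⧸ (J : Submodule S S)) = Ideal.Quotient.mk J 1
    from rfl]
  rw [← LinearEquiv.map_eq_zero_iff (TensorProduct.tensorQuotEquivQuotSMul R J),
    TensorProduct.tensorQuotEquivQuotSMul_tmul_mk, one_smul, mk_eq_zero_iff_mem_map]

/-- The injective map `S ⧸ (J : t) → S ⧸ J` induced by multiplication by `t`. -/
noncomputable def colonMulMap (J : Ideal S) (t : S) :
    (S ⧸ (J.colon (Ideal.span {t}) : Ideal S)) →ₗ[S] S ⧸ J :=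
  Submodule.liftQ _ (J.mkQ ∘ₗ LinearMap.lsmul S S t) (by
    intro x hx
    simp only [LinearMap.mem_ker, LinearMap.coe_comp, Function.comp_apply,
      LinearMap.lsmul_apply, Submodule.mkQ_apply, Submodule.Quotient.mk_eq_zero]
    have := Ideal.mem_colon_span_singleton.mp hx
    rwa [smul_eq_mul, mul_comm])

lemma colonMulMap_mk (J : Ideal S) (t x : S) :
    colonMulMap J t (Submodule.Quotient.mk x) = Submodule.Quotient.mk (t * x) := by
  rw [colonMulMap, Submodule.liftQ_apply]
  simp [smul_eq_mul]

lemma colonMulMap_injective (J : Ideal S) (t : S) :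
    Function.Injective (colonMulMap J t) := by
  rw [← LinearMap.ker_eq_bot, colonMulMap, Submodule.ker_liftQ_eq_bot]
  intro x hx
  simp only [LinearMap.mem_ker, LinearMap.coe_comp, Function.comp_apply,
    LinearMap.lsmul_apply, Submodule.mkQ_apply, Submodule.Quotient.mk_eq_zero] at hx
  rw [smul_eq_mul, mul_comm] at hx
  exact Ideal.mem_colon_span_singleton.mpr hx

/-- Flat descent of single-element colon ideals. -/
lemma colon_single_descent [Module.Flat S R] (J : Ideal S) (t : S) (r : R)
    (h : r * algebraMap S R t ∈ J.map (algebraMap S R)) :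
    r ∈ (J.colon (Ideal.span {t})).map (algebraMap S R) := by
  set K : Ideal S := J.colon (Ideal.span {t}) with hK
  have hinj : Function.Injective ((colonMulMap J t).lTensor R) :=
    Module.Flat.lTensor_preserves_injective_linearMap _ (colonMulMap_injective J t)
  have h1 : (colonMulMap J t).lTensor R
      (r ⊗ₜ[S] (Submodule.Quotient.mk 1 : S ⧸ (K : Submodule S S))) = 0 := by
    rw [LinearMap.lTensor_tmul, colonMulMap_mk, mul_one]
    apply (TensorProduct.tensorQuotEquivQuotSMul R J).injective
    rw [map_zero]
    have : (r ⊗ₜ[S] (Submodule.Quotient.mk t : S ⧸ (J : Submodule S S)))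
        = r ⊗ₜ[S] (Ideal.Quotient.mk J t) := rfl
    rw [this, TensorProduct.tensorQuotEquivQuotSMul_tmul_mk]
    rw [show t • r = r * algebraMap S R t by rw [Algebra.smul_def, mul_comm]]
    exact (mk_eq_zero_iff_mem_map J _).mpr h
  have h2 : (r ⊗ₜ[S] (Submodule.Quotient.mk 1 : S ⧸ (K : Submodule S S))) = 0 := by
    apply hinj; rw [h1, map_zero]
  exact (tmul_mk_one_eq_zero_iff K r).mp h2

/-- The injective diagonal map `S ⧸ (J₁ ⊓ J₂) → S⧸J₁ × S⧸J₂`. -/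
noncomputable def diagMap (J₁ J₂ : Ideal S) :
    (S ⧸ ((J₁ ⊓ J₂ : Ideal S) : Submodule S S)) →ₗ[S] (S ⧸ J₁) × (S ⧸ J₂) :=
  Submodule.liftQ _ (J₁.mkQ.prod J₂.mkQ) (by
    rw [LinearMap.ker_prod, Submodule.ker_mkQ, Submodule.ker_mkQ])

lemma diagMap_mk (J₁ J₂ : Ideal S) (x : S) :
    diagMap J₁ J₂ (Submodule.Quotient.mk x) =
      (Submodule.Quotient.mk x, Submodule.Quotient.mk x) := by
  rw [diagMap, Submodule.liftQ_apply]; rfl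

lemma diagMap_injective (J₁ J₂ : Ideal S) : Function.Injective (diagMap J₁ J₂) := by
  rw [← LinearMap.ker_eq_bot, diagMap, Submodule.ker_liftQ_eq_bot]
  rw [LinearMap.ker_prod, Submodule.ker_mkQ, Submodule.ker_mkQ]

/-- Flat descent of intersections. -/
lemma inf_map_descent [Module.Flat S R] (J₁ J₂ : Ideal S) (r : R)
    (h₁ : r ∈ J₁.map (algebraMap S R)) (h₂ : r ∈ J₂.map (algebraMap S R)) :
    r ∈ (J₁ ⊓ J₂).map (algebraMap S R) := by
  have hinj : Function.Injective ((diagMap J₁ J₂).lTensor R) :=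
    Module.Flat.lTensor_preserves_injective_linearMap _ (diagMap_injective J₁ J₂)
  have h1 : (diagMap J₁ J₂).lTensor R
      (r ⊗ₜ[S] (Submodule.Quotient.mk 1 : S ⧸ ((J₁ ⊓ J₂ : Ideal S) : Submodule S S))) = 0 := by
    rw [LinearMap.lTensor_tmul, diagMap_mk,
      ← LinearEquiv.map_eq_zero_iff (TensorProduct.prodRight S S R (S ⧸ J₁) (S ⧸ J₂)),
      TensorProduct.prodRight_tmul, Prod.ext_iff]
    exact ⟨(tmul_mk_one_eq_zero_iff J₁ r).mpr h₁, (tmul_mk_one_eq_zero_iff J₂ r).mpr h₂⟩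
  have h2 := hinj (show _ = (LinearMap.lTensor R (diagMap J₁ J₂)) 0 by rw [h1]; simp)
  exact (tmul_mk_one_eq_zero_iff (J₁ ⊓ J₂) r).mp h2

lemma colon_sup (J A B : Ideal S) : J.colon ((A ⊔ B : Ideal S) : Set S) = J.colon A ⊓ J.colon B := by
  apply le_antisymm
  · exact le_inf (Submodule.colon_mono le_rfl (SetLike.coe_subset_coe.mpr le_sup_left))
      (Submodule.colon_mono le_rfl (SetLike.coe_subset_coe.mpr le_sup_right))
  · intro x hx
    rw [Submodule.mem_colon]
    intro p hp
    obtain ⟨a, ha, b, hb, rfl⟩ := Submodule.mem_sup.mp hp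
    rw [smul_add]
    exact J.add_mem (Submodule.mem_colon.mp hx.1 a ha) (Submodule.mem_colon.mp hx.2 b hb)

lemma colon_span_descent [Module.Flat S R] (J : Ideal S) (T : Finset S) (r : R)
    (h : ∀ t ∈ T, r * algebraMap S R t ∈ J.map (algebraMap S R)) :
    r ∈ (J.colon (Ideal.span (T : Set S))).map (algebraMap S R) := by
  classical
  induction T using Finset.induction_on with
  | empty =>
      have : J.colon (Ideal.span ((∅ : Finset S) : Set S)) = ⊤ := by
        rw [Finset.coe_empty, Ideal.span_empty, eq_top_iff]
        intro x _
        rw [Submodule.mem_colon]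
        intro p hp
        simp [(Submodule.mem_bot S).mp hp]
      rw [this, Ideal.map_top]
      trivial
  | @insert t T htT ih =>
      have h1 := colon_single_descent J t r (h t (Finset.mem_insert_self t T))
      have h2 := ih (fun s hs => h s (Finset.mem_insert_of_mem hs))
      have h3 := inf_map_descent _ _ r h1 h2
      have h4 : J.colon (Ideal.span ((insert t T : Finset S) : Set S)) =
          J.colon (Ideal.span {t}) ⊓ J.colon (Ideal.span (T : Set S)) := by
        rw [Finset.coe_insert, Ideal.span_insert, colon_sup]
      rw [h4]
      exact h3

lemma colon_fg_descent [Module.Flat S R] (J K : Ideal S) (hfg : K.FG) (r : R)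
    (h : r ∈ (J.map (algebraMap S R)).colon (K.map (algebraMap S R))) :
    r ∈ (J.colon K).map (algebraMap S R) := by
  obtain ⟨T, hT⟩ := hfg
  rw [← hT]
  apply colon_span_descent
  intro t ht
  have h1 : algebraMap S R t ∈ K.map (algebraMap S R) :=
    Ideal.mem_map_of_mem _ (hT ▸ Ideal.subset_span ht)
  have h2 := Submodule.mem_colon.mp h _ h1
  rwa [smul_eq_mul] at h2

lemma map_mem_descent [Module.FaithfullyFlat S R] (J : Ideal S) (s : S)
    (h : algebraMap S R s ∈ J.map (algebraMap S R)) : s ∈ J := by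
  have h1 : (1 : R) * algebraMap S R s ∈ J.map (algebraMap S R) := by rwa [one_mul]
  have h2 := colon_single_descent J s 1 h1
  have h3 : (J.colon (Ideal.span {s})).map (algebraMap S R) = ⊤ :=
    (Ideal.eq_top_iff_one _).mpr h2
  have h4 : J.colon (Ideal.span {s}) = ⊤ := by
    have hff := ((Module.FaithfullyFlat.iff_flat_and_ideal_smul_eq_top S R).mp
      inferInstance).2
    apply hff
    rw [Ideal.smul_top_eq_map, h3]
    rfl
  have h5 : (1 : S) ∈ J.colon (Ideal.span {s}) := h4 ▸ trivial
  simpa using Ideal.mem_colon_span_singleton.mp h5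

/-- Membership in a colon ideal is preserved by extension. -/
lemma mem_colon_map (J K : Ideal S) (x : S) (hx : x ∈ J.colon K) :
    algebraMap S R x ∈ (J.map (algebraMap S R)).colon (K.map (algebraMap S R)) := by
  rw [Submodule.mem_colon]
  intro p hp
  rw [smul_eq_mul]
  have hKD : K.map (algebraMap S R) ≤
      (J.map (algebraMap S R)).colon (Ideal.span {algebraMap S R x}) := by
    rw [Ideal.map_le_iff_le_comap]
    intro k hk
    rw [Ideal.mem_comap, Ideal.mem_colon_span_singleton, ← map_mul]
    refine Ideal.mem_map_of_mem _ ?_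
    have := Submodule.mem_colon.mp hx k hk
    rwa [smul_eq_mul, mul_comm] at this
  have := Ideal.mem_colon_span_singleton.mp (hKD hp)
  rwa [mul_comm] at this

end flatlemmas

lemma subset_rrSet {S : Type*} [CommRing S] (I : Ideal S) : (I : Set S) ⊆ rrSet I := by
  intro x hx
  apply Set.mem_biUnion (Set.mem_Ici.mpr (le_refl 1))
  show x ∈ ((I ^ (1 + 1)).colon ((I ^ 1 : Ideal S) : Set S) : Set S)
  rw [SetLike.mem_coe, Submodule.mem_colon]
  intro p hp
  rw [pow_one] at hp
  rw [smul_eq_mul]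
  have : x * p ∈ I * I := Ideal.mul_mem_mul hx hp
  rwa [show I ^ (1 + 1) = I * I by ring]

/-- If `R` is a faithfully flat `S`-algebra (both commutative Noetherian rings)
and `I ⊂ S` is a regular ideal, then `IR` is Ratliff-Rush closed in `R` iff `I` is
Ratliff-Rush closed in `S`. -/
theorem stmt2 {S R : Type*} [CommRing S] [CommRing R] [IsNoetherianRing S] [IsNoetherianRing R]
    [Algebra S R] [Module.FaithfullyFlat S R] (I : Ideal S)
    (hreg : ∃ x ∈ I, x ∈ nonZeroDivisors S) :
    IsRatliffRushClosed (I.map (algebraMap S R)) ↔ IsRatliffRushClosed I := by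
  clear hreg
  constructor
  · intro hR
    refine Set.Subset.antisymm ?_ (subset_rrSet I)
    intro x hx
    obtain ⟨k, hk, hxk⟩ := Set.mem_iUnion₂.mp hx
    rw [SetLike.mem_coe] at hxk ⊢
    have h1 : algebraMap S R x ∈
        ((I.map (algebraMap S R)) ^ (k + 1)).colon (((I.map (algebraMap S R)) ^ k : Ideal R) : Set R) := by
      rw [← Ideal.map_pow, ← Ideal.map_pow]
      exact mem_colon_map _ _ _ hxk
    have h2 : algebraMap S R x ∈ rrSet (I.map (algebraMap S R)) :=
      Set.mem_biUnion hk h1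
    rw [hR, SetLike.mem_coe] at h2
    exact map_mem_descent I x h2
  · intro hS
    refine Set.Subset.antisymm ?_ (subset_rrSet _)
    intro r hr
    obtain ⟨k, hk, hrk⟩ := Set.mem_iUnion₂.mp hr
    rw [SetLike.mem_coe] at hrk ⊢
    rw [← Ideal.map_pow, ← Ideal.map_pow] at hrk
    have h2 := colon_fg_descent (I ^ (k + 1)) (I ^ k) (IsNoetherian.noetherian _) r hrk
    have h3 : (I ^ (k + 1)).colon ((I ^ k : Ideal S) : Set S) ≤ I := by
      intro y hy
      have : y ∈ rrSet I := Set.mem_biUnion hk hy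
      rwa [hS, SetLike.mem_coe] at this
    exact Ideal.map_mono h3 h2
end

section
/- Let K be a field, let R = K[x_0, …, x_n] and S = K[x_0, …, x_m] with m ≤ n, and let I ⊂ S be a nonzero ideal. Then the extended ideal IR is Ratliff-Rush closed in R if and only if I is Ratliff-Rush closed in S. -/
lemma rr_iff {R : Type*} [CommRing R] (I : Ideal R) :
    IsRatliffRushClosed I ↔ ∀ k, 1 ≤ k → (I ^ (k + 1)).colon ((I ^ k : Ideal R) : Set R) ≤ I := by
  constructor
  · intro h k hk x hx
    have : x ∈ rrSet I := by
      simp only [rrSet, Set.mem_iUnion]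
      exact ⟨k, hk, hx⟩
    rwa [h] at this
  · intro h
    apply Set.eq_of_subset_of_subset
    · intro x hx
      simp only [rrSet, Set.mem_iUnion] at hx
      obtain ⟨k, hk, hx⟩ := hx
      exact h k hk hx
    · intro x hx
      simp only [rrSet, Set.mem_iUnion]
      refine ⟨1, Set.mem_Ici.mpr le_rfl, ?_⟩
      rw [SetLike.mem_coe, Submodule.mem_colon]
      intro p hp
      rw [smul_eq_mul, pow_succ']
      exact Ideal.mul_mem_mul hx hp

lemma colon_map_equiv {R S : Type*} [CommRing R] [CommRing S] (e : R ≃+* S)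
    (A B : Ideal R) :
    (A.map (e : R →+* S)).colon (B.map (e : R →+* S)) = (A.colon B).map (e : R →+* S) := by
  have hmem : ∀ (J : Ideal R) (y : S), y ∈ J.map (e : R →+* S) ↔ e.symm y ∈ J := by
    intro J y
    rw [Ideal.map_comap_of_equiv e, Ideal.mem_comap]
  ext x
  rw [hmem, Submodule.mem_colon, Submodule.mem_colon]
  constructor
  · intro h q hq
    have hq' : e q ∈ B.map (e : R →+* S) := (hmem B (e q)).2 (by rwa [e.symm_apply_apply])
    have := (hmem A _).1 (h (e q) hq')
    rw [smul_eq_mul, map_mul, e.symm_apply_apply] at this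
    exact this
  · intro h p hp
    rw [SetLike.mem_coe] at hp
    rw [hmem] at hp ⊢
    rw [smul_eq_mul, map_mul]
    exact h (e.symm p) hp

lemma rr_map_equiv {R S : Type*} [CommRing R] [CommRing S] (e : R ≃+* S) (I : Ideal R) :
    IsRatliffRushClosed (I.map (e : R →+* S)) ↔ IsRatliffRushClosed I := by
  rw [rr_iff, rr_iff]
  have hmem : ∀ (J : Ideal R) (y : S), y ∈ J.map (e : R →+* S) ↔ e.symm y ∈ J := by
    intro J y
    rw [Ideal.map_comap_of_equiv e, Ideal.mem_comap]
  have hmaple : ∀ (A B : Ideal R), A.map (e : R →+* S) ≤ B.map (e : R →+* S) ↔ A ≤ B := by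
    intro A B
    constructor
    · intro h x hx
      have hx' : e x ∈ A.map (e : R →+* S) := (hmem A (e x)).2 (by rwa [e.symm_apply_apply])
      have := (hmem B _).1 (h hx')
      rwa [e.symm_apply_apply] at this
    · exact Ideal.map_mono
  constructor
  · intro h k hk
    have h2 := h k hk
    rw [← Ideal.map_pow, ← Ideal.map_pow, colon_map_equiv] at h2
    exact (hmaple _ _).1 h2
  · intro h k hk
    rw [← Ideal.map_pow, ← Ideal.map_pow, colon_map_equiv]
    exact Ideal.map_mono (h k hk)

open MvPolynomial in
lemma colon_map_C {R : Type*} [CommRing R] {σ : Type*} (A B : Ideal R) :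
    ((A.map (C : R →+* MvPolynomial σ R)).colon (B.map (C : R →+* MvPolynomial σ R))) =
      (A.colon B).map (C : R →+* MvPolynomial σ R) := by
  classical
  ext x
  rw [mem_map_C_iff, Submodule.mem_colon]
  constructor
  · intro h ν
    rw [Submodule.mem_colon]
    intro b hb
    have := h (C b) (Ideal.mem_map_of_mem _ hb)
    rw [smul_eq_mul, mem_map_C_iff] at this
    have h2 := this ν
    rw [mul_comm x (C b), coeff_C_mul] at h2
    rwa [smul_eq_mul, mul_comm]
  · intro h p hp
    rw [smul_eq_mul, mem_map_C_iff]
    intro ν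
    rw [coeff_mul]
    apply Ideal.sum_mem
    rintro ⟨u, v⟩ huv
    have hx : x.coeff u ∈ A.colon B := h u
    have hpv : p.coeff v ∈ B := mem_map_C_iff.1 hp v
    rw [Submodule.mem_colon] at hx
    exact hx _ hpv

open MvPolynomial in
lemma rr_map_C {R : Type*} [CommRing R] {σ : Type*} (I : Ideal R) :
    IsRatliffRushClosed (I.map (C : R →+* MvPolynomial σ R)) ↔ IsRatliffRushClosed I := by
  classical
  rw [rr_iff, rr_iff]
  constructor
  · intro h k hk x hx
    have : C x ∈ (I.map (C : R →+* MvPolynomial σ R) ^ (k + 1)).colon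
        ((I.map (C : R →+* MvPolynomial σ R) ^ k : Ideal (MvPolynomial σ R)) : Set _) := by
      rw [← Ideal.map_pow, ← Ideal.map_pow, colon_map_C]
      exact Ideal.mem_map_of_mem _ hx
    have := h k hk this
    have := mem_map_C_iff.1 this 0
    rwa [coeff_zero_C] at this
  · intro h k hk
    rw [← Ideal.map_pow, ← Ideal.map_pow, colon_map_C]
    exact Ideal.map_mono (h k hk)

/-- Let `R = K[x_0, …, x_n]` and `S = K[x_0, …, x_m]` with `m ≤ n`, and let
`I ⊂ S` be a nonzero ideal. Then `IR` is Ratliff-Rush closed in `R` iff `I` is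
Ratliff-Rush closed in `S`. -/
theorem stmt3 {K : Type*} [Field K] (n m : ℕ) (hmn : m ≤ n)
    (I : Ideal (MvPolynomial (Fin (m + 1)) K)) (hI : I ≠ ⊥) :
    IsRatliffRushClosed
      (I.map (MvPolynomial.rename (R := K) (Fin.castLE (Nat.succ_le_succ hmn))).toRingHom) ↔
    IsRatliffRushClosed I := by
  classical
  set d := n - m with hd
  have hnd : (m + 1) + d = n + 1 := by omega
  -- variable equivalence
  let j : (Fin d ⊕ Fin (m + 1)) ≃ Fin (n + 1) :=
    (Equiv.sumComm (Fin d) (Fin (m + 1))).trans ((finSumFinEquiv).trans (finCongr hnd))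
  let Ψ : MvPolynomial (Fin (n + 1)) K ≃+*
      MvPolynomial (Fin d) (MvPolynomial (Fin (m + 1)) K) :=
    ((MvPolynomial.renameEquiv K j.symm).trans
      (MvPolynomial.sumAlgEquiv K (Fin d) (Fin (m + 1)))).toRingEquiv
  have key : ∀ p : MvPolynomial (Fin (m + 1)) K,
      Ψ ((MvPolynomial.rename (R := K) (Fin.castLE (Nat.succ_le_succ hmn))) p) =
      MvPolynomial.C p := by
    intro p
    induction p using MvPolynomial.induction_on with
    | C a =>
        simp only [Ψ, MvPolynomial.rename_C, AlgEquiv.toRingEquiv_eq_coe, RingEquiv.coe_toEquiv,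
          AlgEquiv.coe_ringEquiv, AlgEquiv.trans_apply, MvPolynomial.renameEquiv_apply,
          MvPolynomial.rename_C]
        exact MvPolynomial.sumAlgEquiv_C_inl K _ _ a
    | add p q hp hq => simp [map_add, hp, hq]
    | mul_X p i hp =>
        rw [map_mul, map_mul, hp, map_mul]
        congr 1
        have hj : j (Sum.inr i) = Fin.castLE (Nat.succ_le_succ hmn) i := by
          apply Fin.ext
          simp [j]
        simp only [MvPolynomial.rename_X]
        show Ψ (MvPolynomial.X _) = _
        have : (j.symm (Fin.castLE (Nat.succ_le_succ hmn) i)) = Sum.inr i := by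
          rw [← hj, Equiv.symm_apply_apply]
        simp only [Ψ, AlgEquiv.toRingEquiv_eq_coe, AlgEquiv.coe_ringEquiv, AlgEquiv.trans_apply,
          MvPolynomial.renameEquiv_apply, MvPolynomial.rename_X, this]
        exact MvPolynomial.sumAlgEquiv_X_inr K _ _ i
  have hcomp : (I.map (MvPolynomial.rename (R := K)
        (Fin.castLE (Nat.succ_le_succ hmn))).toRingHom).map (Ψ : _ →+* _) =
      I.map (MvPolynomial.C :
        MvPolynomial (Fin (m + 1)) K →+* MvPolynomial (Fin d) (MvPolynomial (Fin (m + 1)) K)) := by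
    rw [Ideal.map_map]
    congr 1
    exact RingHom.ext fun p => key p
  rw [← rr_map_equiv Ψ, hcomp, rr_map_C]
end

section
/- Let K be a field, let I be an ideal in the polynomial ring R = K[x_0, …, x_n], and let r ≥ 1. If I is primary to the ideal (x_r, …, x_n) (that is, I is a primary ideal whose radical is (x_r, …, x_n)) and Ĩ ∩ (I : (x_r, …, x_n)) ⊆ I, then I is Ratliff-Rush closed. -/
/-- Let `I` be an ideal of `K[x_0, …, x_n]` and `r ≥ 1`. If `I` is primary with
radical `(x_r, …, x_n)` and `Ĩ ∩ (I : (x_r, …, x_n)) ⊆ I`, then `I` is Ratliff-Rush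
closed. -/
theorem stmt4 {K : Type*} [Field K] (n r : ℕ) (hr : 1 ≤ r) (hrn : r ≤ n)
    (I : Ideal (MvPolynomial (Fin (n + 1)) K))
    (M : Ideal (MvPolynomial (Fin (n + 1)) K))
    (hM : M = Ideal.span {f | ∃ i : Fin (n + 1), r ≤ (i : ℕ) ∧ f = MvPolynomial.X i})
    (hprimary : I.IsPrimary) (hrad : I.radical = M)
    (hsub : rrSet I ∩ (I.colon M : Set (MvPolynomial (Fin (n + 1)) K)) ⊆ (I : Set _)) :
    rrSet I = (I : Set (MvPolynomial (Fin (n + 1)) K)) := by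
  classical
  have hIM : I ≤ M := hrad ▸ Ideal.le_radical
  have hMne : (1 : MvPolynomial (Fin (n + 1)) K) ∉ M := by
    intro h1
    have hker : M ≤ RingHom.ker (MvPolynomial.constantCoeff (σ := Fin (n + 1)) (R := K)) := by
      rw [hM, Ideal.span_le]
      rintro f ⟨i, -, rfl⟩
      simp [RingHom.mem_ker]
    have := hker h1
    simp [RingHom.mem_ker] at this
  obtain ⟨N, hN⟩ := Ideal.exists_radical_pow_le_of_fg I (IsNoetherian.noetherian _)
  rw [hrad] at hN
  have hN1 : 1 ≤ N := by
    rcases Nat.eq_zero_or_pos N with rfl | h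
    · exfalso
      exact hMne (hIM (hN (by simp)))
    · exact h
  -- rrSet is closed under multiplication by ring elements
  have hmul : ∀ x ∈ rrSet I, ∀ c, c * x ∈ rrSet I := by
    intro x hx c
    simp only [rrSet, Set.mem_iUnion, Set.mem_Ici, SetLike.mem_coe, exists_prop] at hx ⊢
    obtain ⟨k, hk, hxk⟩ := hx
    exact ⟨k, hk, Ideal.mul_mem_left _ c hxk⟩
  -- key downward-induction claim
  have claim : ∀ t : ℕ, ∀ y, y ∈ rrSet I → (∀ m ∈ M ^ (t + 1), y * m ∈ I) → y ∈ I := by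
    intro t
    induction t with
    | zero =>
      intro y hy hyM
      refine hsub ⟨hy, ?_⟩
      refine Submodule.mem_colon.mpr fun p hp => ?_
      simpa [smul_eq_mul] using hyM p (by simpa using hp)
    | succ t ih =>
      intro y hy hyM
      refine ih y hy fun m hm => ?_
      refine hsub ⟨by simpa [mul_comm] using hmul y hy m, ?_⟩
      refine Submodule.mem_colon.mpr fun p hp => ?_
      have hmp : m * p ∈ M ^ (t + 1 + 1) := by
        rw [pow_succ]
        exact Ideal.mul_mem_mul hm hp
      simpa [smul_eq_mul, mul_assoc] using hyM (m * p) hmp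
  apply Set.Subset.antisymm
  · intro x hx
    have hx' := hx
    simp only [rrSet, Set.mem_iUnion, Set.mem_Ici, SetLike.mem_coe, exists_prop] at hx'
    obtain ⟨k, hk, hxk⟩ := hx'
    have hMk : M ^ (N * k) ≤ I ^ k := by
      rw [pow_mul]
      exact Ideal.pow_right_mono hN k
    have hNk : 1 ≤ N * k := Nat.mul_pos hN1 hk
    obtain ⟨t, ht⟩ : ∃ t, N * k = t + 1 := ⟨N * k - 1, (Nat.succ_pred_eq_of_pos hNk).symm⟩
    refine claim t x hx fun m hm => ?_
    have hm' : m ∈ I ^ k := hMk (by rw [ht]; exact hm)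
    have : x * m ∈ I ^ (k + 1) := by
      simpa [smul_eq_mul] using Submodule.mem_colon.mp hxk m hm'
    exact Ideal.pow_le_self (Nat.succ_ne_zero k) this
  · intro x hx
    simp only [rrSet, Set.mem_iUnion, Set.mem_Ici, SetLike.mem_coe, exists_prop]
    refine ⟨1, le_refl 1, Submodule.mem_colon.mpr fun p hp => ?_⟩
    have : x * p ∈ I * I := Ideal.mul_mem_mul hx (by simpa using hp)
    simpa [smul_eq_mul, pow_two] using this
end

section
/- With the semigroup notation given in the context, let u = min{t ≥ 0 : g_t ∉ S} and υ = min{b ≥ 1 : b m_n ∈ Γ′}. Then there exist unique integers w ∈ [0, υ−1], z ∈ [0, u−1], λ ≥ 1 and μ ≥ 0 such that: (i) g_u = λ m_0 + w m_n; (ii) υ m_n = μ m_0 + g_z; and (iii) g_{u−z} + (υ−w) m_n equals (λ + μ + 1) m_0 if r_{u−z} < r_u, and equals (λ + μ) m_0 if r_{u−z} ≥ r_u. -/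
/-- helper: if `q * p = a` with `1 - p ≤ a ≤ 2p - 2`, `1 ≤ p`, then `q = 0` or `q = 1`. -/
private lemma stmt6_intvl {p q a : ℤ} (hp : 1 ≤ p) (h : q * p = a)
    (h1 : 1 - p ≤ a) (h2 : a ≤ 2 * p - 2) : q = 0 ∨ q = 1 := by
  rcases le_or_gt q (-1) with hq | hq
  · exfalso
    have : q * p ≤ (-1) * p := mul_le_mul_of_nonneg_right hq (by linarith)
    linarith
  rcases le_or_gt 2 q with hq2 | hq2
  · exfalso
    have : 2 * p ≤ q * p := mul_le_mul_of_nonneg_right hq2 (by linarith)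
    linarith
  omega

set_option maxHeartbeats 3000000 in
/-- Patil's Lemma 1.6: with the semigroup notation, letting
`u = min{t ≥ 0 : g_t ∉ S}` and `v = min{b ≥ 1 : b m_n ∈ Γ'}`, there exist unique integers
`w ∈ [0, v−1]`, `z ∈ [0, u−1]`, `λ ≥ 1`, `μ ≥ 0` satisfying (i) `g_u = λ m_0 + w m_n`;
(ii) `v m_n = μ m_0 + g_z`; (iii) `g_{u−z} + (v−w) m_n = (λ+μ+1) m_0` if `r_{u−z} < r_u`
and `= (λ+μ) m_0` if `r_{u−z} ≥ r_u`. -/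
theorem stmt6 (n p : ℕ) (hn : 2 ≤ n) (hp : p = n - 1)
    (m : ℕ → ℕ) (hm0 : 0 < m 0) (hmn : 0 < m n)
    (harith : ∃ d : ℕ, 0 < d ∧ ∀ i < p, m (i + 1) = m i + d)
    (hgcd : ∀ c : ℕ, (∀ i ≤ p, c ∣ m i) → c ∣ m n → c = 1)
    (Γ Γ' : AddSubmonoid ℤ)
    (hΓ : Γ = AddSubmonoid.closure ((fun i => (m i : ℤ)) '' (Set.Iic p ∪ {n})))
    (hΓ' : Γ' = AddSubmonoid.closure ((fun i => (m i : ℤ)) '' Set.Iic p))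
    (hmin : ∀ j ∈ (Set.Iic p ∪ {n} : Set ℕ),
      (m j : ℤ) ∉ AddSubmonoid.closure ((fun i => (m i : ℤ)) '' ((Set.Iic p ∪ {n}) \ {j})))
    (qf : ℕ → ℤ) (rf : ℕ → ℕ)
    (hqr : ∀ t : ℕ, 1 ≤ rf t ∧ rf t ≤ p ∧ (t : ℤ) = qf t * p + rf t)
    (g : ℕ → ℤ) (hg : ∀ t, g t = qf t * m p + m (rf t))
    (S : Set ℤ) (hS : S = {γ : ℤ | γ ∈ Γ ∧ γ - m 0 ∉ Γ})
    (u : ℕ) (hu : g u ∉ S ∧ ∀ t < u, g t ∈ S)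
    (v : ℕ) (hv1 : 1 ≤ v) (hv2 : (v : ℤ) * m n ∈ Γ')
    (hv3 : ∀ b : ℕ, 1 ≤ b → b < v → (b : ℤ) * m n ∉ Γ') :
    ∃! x : ℕ × ℕ × ℕ × ℕ,
      x.1 ≤ v - 1 ∧ x.2.1 ≤ u - 1 ∧ 1 ≤ x.2.2.1 ∧
      g u = (x.2.2.1 : ℤ) * m 0 + (x.1 : ℤ) * m n ∧
      (v : ℤ) * m n = (x.2.2.2 : ℤ) * m 0 + g x.2.1 ∧
      g (u - x.2.1) + ((v : ℤ) - (x.1 : ℤ)) * m n =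
        (if rf (u - x.2.1) < rf u then ((x.2.2.1 : ℤ) + x.2.2.2 + 1)
          else ((x.2.2.1 : ℤ) + x.2.2.2)) * m 0 := by
  classical
  have hp1 : 1 ≤ p := by omega
  obtain ⟨d, hd, hmd⟩ := harith
  have hd' : (1 : ℤ) ≤ (d : ℤ) := by exact_mod_cast hd
  have hm0' : (1 : ℤ) ≤ (m 0 : ℤ) := by exact_mod_cast hm0
  -- arithmetic progression
  have hm : ∀ i, i ≤ p → (m i : ℤ) = (m 0 : ℤ) + i * d := by
    intro i hi
    induction i with
    | zero => simp
    | succ k ih =>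
      have hk : k < p := by omega
      have h2 := hmd k hk
      have h3 := ih (le_of_lt hk)
      push_cast [h2, h3]
      ring
  have hqr1 : ∀ t : ℕ, 1 ≤ rf t := fun t => (hqr t).1
  have hqr2 : ∀ t : ℕ, rf t ≤ p := fun t => (hqr t).2.1
  have hqr3 : ∀ t : ℕ, (t : ℤ) = qf t * p + rf t := fun t => (hqr t).2.2
  -- the normal form of g
  have hG : ∀ t : ℕ, g t = (qf t + 1) * m 0 + t * d := by
    intro t
    rw [hg t, hm p le_rfl, hm (rf t) (hqr2 t), hqr3 t]
    ring
  have hq0 : qf 0 = -1 := by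
    have h := hqr3 0
    have h1 := hqr1 0
    have h2 := hqr2 0
    have hpz : (0 : ℤ) < p := by exact_mod_cast hp1
    rcases le_or_gt (qf 0) (-2) with hq | hq
    · exfalso
      have ha : qf 0 * p ≤ (-2) * p := mul_le_mul_of_nonneg_right hq hpz.le
      have hb : (rf 0 : ℤ) ≤ p := by exact_mod_cast h2
      push_cast at h
      linarith
    rcases le_or_gt 0 (qf 0) with hq2 | hq2
    · exfalso
      have ha : 0 ≤ qf 0 * p := mul_nonneg hq2 hpz.le
      have hb : (1 : ℤ) ≤ rf 0 := by exact_mod_cast h1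
      push_cast at h
      linarith
    omega
  have hr0 : rf 0 = p := by
    have h := hqr3 0
    rw [hq0] at h
    push_cast at h
    have : (rf 0 : ℤ) = p := by linarith
    exact_mod_cast this
  have hg0 : g 0 = 0 := by
    rw [hG 0, hq0]; ring
  -- g is strictly monotone
  have hqmono : ∀ s t : ℕ, s < t → qf s ≤ qf t := by
    intro s t hst
    have hs := hqr3 s
    have ht := hqr3 t
    have h1 := hqr1 s
    have h2 := hqr2 t
    have hpz : (0 : ℤ) < p := by exact_mod_cast hp1
    by_contra hc
    push_neg at hc
    have h3 : qf t + 1 ≤ qf s := hc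
    have h4 : (qf t + 1) * p ≤ qf s * p := mul_le_mul_of_nonneg_right h3 hpz.le
    have h5 : (rf s : ℤ) ≥ 1 := by exact_mod_cast h1
    have h6 : (rf t : ℤ) ≤ p := by exact_mod_cast h2
    have h7 : (s : ℤ) < t := by exact_mod_cast hst
    have h8 : qf t * p + p ≤ qf s * p := by linarith [h4]; 
    linarith [hs, ht]
  have hgmono : ∀ s t : ℕ, s < t → g s < g t := by
    intro s t hst
    rw [hG s, hG t]
    have h1 := hqmono s t hst
    have h2 : (s : ℤ) < t := by exact_mod_cast hst
    have h3 : (qf s : ℤ) * m 0 ≤ qf t * m 0 :=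
      mul_le_mul_of_nonneg_right h1 (by linarith)
    have h4 : ((s : ℤ) + 1) * d ≤ (t : ℤ) * d :=
      mul_le_mul_of_nonneg_right (by linarith) (by linarith)
    nlinarith [h3, h4]
  have hgmono' : ∀ s t : ℕ, g s < g t → s < t := by
    intro s t h
    by_contra hc
    push_neg at hc
    rcases lt_or_eq_of_le hc with h2 | h2
    · exact absurd (hgmono t s h2) (by linarith)
    · subst h2; linarith
  -- the delta lemma
  have hdelta : ∀ s t : ℕ, ∃ δ : ℤ, (δ = 0 ∨ δ = 1) ∧
      g s + g t = g (s + t) + δ * m 0 ∧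
      ((rf s : ℤ) + rf t = rf (s + t) + (1 - δ) * p) := by
    intro s t
    refine ⟨qf s + qf t + 1 - qf (s + t), ?_, ?_, ?_⟩
    · have hs := hqr3 s
      have ht := hqr3 t
      have hst := hqr3 (s + t)
      have key : (qf s + qf t + 1 - qf (s + t)) * p
          = (p : ℤ) + rf (s + t) - rf s - rf t := by
        push_cast at hst ⊢
        linear_combination hst - hs - ht
      apply stmt6_intvl (p := (p : ℤ)) (by exact_mod_cast hp1) key
      · have := hqr2 s; have := hqr2 t; have := hqr1 (s + t)
        have h1 : (rf s : ℤ) ≤ p := by exact_mod_cast hqr2 s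
        have h2 : (rf t : ℤ) ≤ p := by exact_mod_cast hqr2 t
        have h3 : (1 : ℤ) ≤ rf (s + t) := by exact_mod_cast hqr1 (s + t)
        linarith
      · have h1 : (1 : ℤ) ≤ rf s := by exact_mod_cast hqr1 s
        have h2 : (1 : ℤ) ≤ rf t := by exact_mod_cast hqr1 t
        have h3 : (rf (s + t) : ℤ) ≤ p := by exact_mod_cast hqr2 (s + t)
        linarith
    · rw [hG s, hG t, hG (s + t)]
      push_cast
      ring
    · have hs := hqr3 s
      have ht := hqr3 t
      have hst := hqr3 (s + t)
      push_cast at hst ⊢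
      linear_combination hst - hs - ht
  -- memberships (forward)
  have hmemΓ' : ∀ i, i ≤ p → (m i : ℤ) ∈ Γ' := by
    intro i hi
    rw [hΓ']
    exact AddSubmonoid.subset_closure ⟨i, hi, rfl⟩
  have hΓ'Γ : ∀ x, x ∈ Γ' → x ∈ Γ := by
    intro x hx
    rw [hΓ'] at hx
    rw [hΓ]
    exact AddSubmonoid.closure_mono
      (Set.image_mono Set.subset_union_left) hx
  have hmnΓ : (m n : ℤ) ∈ Γ := by
    rw [hΓ]
    exact AddSubmonoid.subset_closure ⟨n, Or.inr rfl, rfl⟩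
  have hgΓ' : ∀ t, g t ∈ Γ' := by
    intro t
    rcases Nat.eq_zero_or_pos t with h | h
    · subst h; rw [hg0]; exact zero_mem _
    · have hq : 0 ≤ qf t := by
        have hs := hqr3 t
        have h2 : (rf t : ℤ) ≤ p := by exact_mod_cast hqr2 t
        have hpz : (0 : ℤ) < p := by exact_mod_cast hp1
        have h3 : (1 : ℤ) ≤ t := by exact_mod_cast h
        by_contra hc
        push_neg at hc
        have h4 : qf t ≤ -1 := by omega
        have : qf t * p ≤ (-1) * p := mul_le_mul_of_nonneg_right h4 hpz.le
        linarith
      rw [hg t]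
      have heq : qf t * (m p : ℤ) = (qf t).toNat • (m p : ℤ) := by
        rw [nsmul_eq_mul]
        congr 1
        exact_mod_cast (Int.toNat_of_nonneg hq).symm
      rw [heq]
      exact add_mem (AddSubmonoid.nsmul_mem _ (hmemΓ' p le_rfl) _) (hmemΓ' _ (hqr2 t))
  have hfor' : ∀ a t : ℕ, ((a : ℤ) * m 0 + g t) ∈ Γ' := by
    intro a t
    have h1 : (a : ℤ) * m 0 = a • (m 0 : ℤ) := by rw [nsmul_eq_mul]
    rw [h1]
    exact add_mem (AddSubmonoid.nsmul_mem _ (hmemΓ' 0 (Nat.zero_le p)) _) (hgΓ' t)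
  have hfor : ∀ a t b : ℕ, ((a : ℤ) * m 0 + g t + (b : ℤ) * m n) ∈ Γ := by
    intro a t b
    have h1 : (b : ℤ) * m n = b • (m n : ℤ) := by rw [nsmul_eq_mul]
    rw [h1]
    exact add_mem (hΓ'Γ _ (hfor' a t)) (AddSubmonoid.nsmul_mem _ hmnΓ _)
  -- membership (reverse) for Γ'
  have hrep' : ∀ x, x ∈ Γ' → ∃ a t : ℕ, x = (a : ℤ) * m 0 + g t := by
    intro x hx
    rw [hΓ'] at hx
    induction hx using AddSubmonoid.closure_induction with
    | mem y hy =>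
      obtain ⟨i, hi, rfl⟩ := hy
      simp only [Set.mem_Iic] at hi
      rcases Nat.eq_zero_or_pos i with h | h
      · subst h
        exact ⟨1, 0, by rw [hg0]; ring⟩
      · refine ⟨0, i, ?_⟩
        have hqi : qf i = 0 ∧ rf i = i := by
          have hs := hqr3 i
          have h1 : (1 : ℤ) ≤ rf i := by exact_mod_cast hqr1 i
          have h2 : (rf i : ℤ) ≤ p := by exact_mod_cast hqr2 i
          have h3 : (1 : ℤ) ≤ i := by exact_mod_cast h
          have h4 : (i : ℤ) ≤ p := by exact_mod_cast hi
          have hpz : (0 : ℤ) < p := by exact_mod_cast hp1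
          have hq : qf i = 0 := by
            rcases le_or_gt (qf i) (-1) with hc | hc
            · exfalso
              have := mul_le_mul_of_nonneg_right hc hpz.le
              linarith
            rcases le_or_gt 1 (qf i) with hc2 | hc2
            · exfalso
              have := mul_le_mul_of_nonneg_right hc2 hpz.le
              linarith
            omega
          refine ⟨hq, ?_⟩
          rw [hq] at hs
          have : (i : ℤ) = rf i := by linarith
          exact_mod_cast this.symm
        rw [hg i, hqi.1, hqi.2]
        push_cast
        ring
    | zero => exact ⟨0, 0, by rw [hg0]; ring⟩
    | add x y hx hy ihx ihy =>
      obtain ⟨a, t, rfl⟩ := ihx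
      obtain ⟨a', t', rfl⟩ := ihy
      obtain ⟨δ, hδ01, hδeq, -⟩ := hdelta t t'
      rcases hδ01 with h0 | h1
      · refine ⟨a + a', t + t', ?_⟩
        rw [h0] at hδeq
        push_cast
        linarith
      · refine ⟨a + a' + 1, t + t', ?_⟩
        rw [h1] at hδeq
        push_cast
        linarith
  -- membership (reverse) for Γ
  have hrep : ∀ x, x ∈ Γ → ∃ a t b : ℕ, x = (a : ℤ) * m 0 + g t + (b : ℤ) * m n := by
    intro x hx
    rw [hΓ] at hx
    induction hx using AddSubmonoid.closure_induction with
    | mem y hy =>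
      obtain ⟨i, hi, rfl⟩ := hy
      rcases hi with hi | hi
      · simp only [Set.mem_Iic] at hi
        obtain ⟨a, t, h⟩ := hrep' _ (hmemΓ' i hi)
        exact ⟨a, t, 0, by beta_reduce; rw [h]; push_cast; ring⟩
      · simp only [Set.mem_singleton_iff] at hi
        subst hi
        exact ⟨0, 0, 1, by rw [hg0]; push_cast; ring⟩
    | zero => exact ⟨0, 0, 0, by rw [hg0]; push_cast; ring⟩
    | add x y hx hy ihx ihy =>
      obtain ⟨a, t, b, rfl⟩ := ihx
      obtain ⟨a', t', b', rfl⟩ := ihy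
      obtain ⟨δ, hδ01, hδeq, -⟩ := hdelta t t'
      rcases hδ01 with h0 | h1
      · refine ⟨a + a', t + t', b + b', ?_⟩
        rw [h0] at hδeq
        push_cast
        linarith
      · refine ⟨a + a' + 1, t + t', b + b', ?_⟩
        rw [h1] at hδeq
        push_cast
        linarith
  -- Γ consists of nonnegative integers
  have hnonneg : ∀ x, x ∈ Γ → 0 ≤ x := by
    intro x hx
    rw [hΓ] at hx
    induction hx using AddSubmonoid.closure_induction with
    | mem y hy =>
      obtain ⟨i, _, rfl⟩ := hy
      positivity
    | zero => exact le_refl 0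
    | add x y hx hy ihx ihy => linarith
  -- u ≥ 1
  have hu1 : 1 ≤ u := by
    by_contra h
    have hu0 : u = 0 := by omega
    apply hu.1
    rw [hu0, hS, hg0]
    refine ⟨zero_mem _, fun hc => ?_⟩
    have := hnonneg _ hc
    linarith
  -- Part (i): existence of the representation g u = λ m0 + w mn
  have hguΓ : g u ∈ Γ := hΓ'Γ _ (hgΓ' u)
  have hgu_red : g u - (m 0 : ℤ) ∈ Γ := by
    by_contra hc
    exact hu.1 (by rw [hS]; exact ⟨hguΓ, hc⟩)
  -- minimal b admitting a representation g u = a m0 + g t + b mn with a ≥ 1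
  obtain ⟨a0, t0, b0, h0⟩ := hrep _ hgu_red
  have hPex : ∃ b : ℕ, ∃ a t : ℕ, 1 ≤ a ∧ g u = (a : ℤ) * m 0 + g t + (b : ℤ) * m n :=
    ⟨b0, a0 + 1, t0, by omega, by push_cast; linarith [h0]⟩
  set w := Nat.find hPex with hwdef
  obtain ⟨a1, t1, ha1, hrep1⟩ := Nat.find_spec hPex
  have hwv : w < v := by
    by_contra hc
    push_neg at hc
    obtain ⟨a2, t2, h2⟩ := hrep' _ hv2
    obtain ⟨δ, hδ01, hδeq, -⟩ := hdelta t1 t2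
    apply Nat.find_min hPex (show w - v < w by omega)
    refine ⟨a1 + a2 + δ.toNat, t1 + t2, by omega, ?_⟩
    have hδn : (δ.toNat : ℤ) = δ := Int.toNat_of_nonneg (by rcases hδ01 with h | h <;> simp [h])
    rw [show ((w - v : ℕ) : ℤ) = (w : ℤ) - v by omega]
    push_cast [hδn]
    linear_combination hrep1 + h2 + hδeq
  have ht1 : t1 = 0 := by
    by_contra hne
    have ht1p : 1 ≤ t1 := Nat.one_le_iff_ne_zero.mpr hne
    have hlt : g t1 < g u := by
      rw [hrep1]
      have h1 : (1 : ℤ) ≤ (a1 : ℤ) := by exact_mod_cast ha1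
      have h2 : (0 : ℤ) ≤ (w : ℤ) * m n := by positivity
      have h3 : (1 : ℤ) * m 0 ≤ (a1 : ℤ) * m 0 :=
        mul_le_mul_of_nonneg_right h1 (by linarith)
      linarith
    have ht1u : t1 < u := hgmono' _ _ hlt
    have hmem := hu.2 (u - t1) (by omega)
    rw [hS] at hmem
    simp only [Set.mem_setOf_eq] at hmem
    apply hmem.2
    obtain ⟨δ, hδ01, hδeq, -⟩ := hdelta (u - t1) t1
    rw [Nat.sub_add_cancel (le_of_lt ht1u)] at hδeq
    have hδn : (δ.toNat : ℤ) = δ := Int.toNat_of_nonneg (by rcases hδ01 with h | h <;> simp [h])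
    have hkey : g (u - t1) - (m 0 : ℤ)
        = ((a1 - 1 + δ.toNat : ℕ) : ℤ) * m 0 + g 0 + (w : ℤ) * m n := by
      rw [hg0, show ((a1 - 1 + δ.toNat : ℕ) : ℤ) = (a1 : ℤ) - 1 + δ by omega]
      linear_combination hδeq + hrep1
    rw [hkey]
    exact hfor _ _ _
  have heqi : g u = (a1 : ℤ) * m 0 + (w : ℤ) * m n := by
    rw [hrep1, ht1, hg0]; ring
  -- minimal z admitting a representation v mn = μ m0 + g z
  have hQex : ∃ z : ℕ, ∃ μ : ℕ, (v : ℤ) * m n = (μ : ℤ) * m 0 + g z := by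
    obtain ⟨a2, t2, h2⟩ := hrep' _ hv2
    exact ⟨t2, a2, h2⟩
  set z := Nat.find hQex with hzdef
  obtain ⟨μ, hrep2⟩ := Nat.find_spec hQex
  have hzu : z < u := by
    by_contra hc
    push_neg at hc
    obtain ⟨δ, hδ01, hδeq, -⟩ := hdelta u (z - u)
    rw [Nat.add_sub_cancel' hc] at hδeq
    have hδn : (δ.toNat : ℤ) = δ := Int.toNat_of_nonneg (by rcases hδ01 with h | h <;> simp [h])
    have hδ1 : δ.toNat ≤ 1 := by omega
    have hkey : ((v : ℤ) - w) * m n = ((μ + a1 - δ.toNat : ℕ) : ℤ) * m 0 + g (z - u) := by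
      rw [show ((μ + a1 - δ.toNat : ℕ) : ℤ) = (μ : ℤ) + a1 - δ by omega]
      linear_combination hrep2 + heqi - hδeq
    rcases Nat.eq_zero_or_pos w with hw0 | hw1
    · apply Nat.find_min hQex (show z - u < z by omega)
      refine ⟨μ + a1 - δ.toNat, ?_⟩
      rw [hw0] at hkey
      push_cast at hkey
      linarith [hkey]
    · apply hv3 (v - w) (by omega) (by omega)
      rw [show ((v - w : ℕ) : ℤ) = (v : ℤ) - w by omega, hkey]
      exact hfor' _ _
  -- part (iii)
  obtain ⟨δ, hδ01, hδeq, hδr⟩ := hdelta (u - z) z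
  rw [Nat.sub_add_cancel hzu.le] at hδeq hδr
  have hiii : g (u - z) + ((v : ℤ) - w) * m n = ((a1 : ℤ) + μ + δ) * m 0 := by
    linear_combination hδeq + hrep2 + heqi
  have hif : (if rf (u - z) < rf u then ((a1 : ℤ) + μ + 1) else ((a1 : ℤ) + μ)) * m 0
      = ((a1 : ℤ) + μ + δ) * m 0 := by
    have h1 : (1 : ℤ) ≤ rf z := by exact_mod_cast hqr1 z
    have h2 : (rf z : ℤ) ≤ p := by exact_mod_cast hqr2 z
    rcases hδ01 with h | h
    · rw [h]
      rw [if_neg]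
      · ring
      · rw [h] at hδr
        intro hlt
        have : (rf (u - z) : ℤ) < rf u := by exact_mod_cast hlt
        have hpz : (0 : ℤ) < p := by exact_mod_cast hp1
        linarith [hδr]
    · rw [h]
      rw [if_pos]
      rw [h] at hδr
      have : (rf (u - z) : ℤ) < rf u := by linarith [hδr]
      exact_mod_cast this
  -- assembling
  refine ⟨(w, z, a1, μ), ⟨?_, ?_, ?_, ?_, ?_, ?_⟩, ?_⟩
  · show w ≤ v - 1; omega
  · show z ≤ u - 1; omega
  · exact ha1
  · exact heqi
  · exact hrep2
  · show g (u - z) + _ = _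
    rw [hif]; exact hiii
  rintro ⟨w', z', l', μ'⟩ ⟨hy1, hy2, hy3, hy4, hy5, -⟩
  simp only at hy1 hy2 hy3 hy4 hy5 ⊢
  -- first component
  have hww : w' = w ∧ l' = a1 := by
    rcases lt_trichotomy w' w with hlt | heq | hgt
    · exfalso
      have hmul : ((w : ℤ) - w') * m n = ((l' : ℤ) - a1) * m 0 := by
        linear_combination hy4 - heqi
      have hpos : (0 : ℤ) < ((w : ℤ) - w') * m n := by
        have h1 : (0 : ℤ) < (w : ℤ) - w' := by
          have : (w' : ℤ) < w := by exact_mod_cast hlt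
          linarith
        have h2 : (0 : ℤ) < (m n : ℤ) := by exact_mod_cast hmn
        positivity
      have hla : (a1 : ℤ) < l' := by
        by_contra hcc
        push_neg at hcc
        have : ((l' : ℤ) - a1) * m 0 ≤ 0 :=
          mul_nonpos_of_nonpos_of_nonneg (by linarith) (by linarith)
        linarith
      apply hv3 (w - w') (by omega) (by omega)
      have : ((w - w' : ℕ) : ℤ) * m n = ((l' - a1 : ℕ) : ℤ) * m 0 + g 0 := by
        rw [hg0, show ((w - w' : ℕ) : ℤ) = (w : ℤ) - w' by omega,
          show ((l' - a1 : ℕ) : ℤ) = (l' : ℤ) - a1 by omega]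
        linarith [hmul]
      rw [this]
      exact hfor' _ _
    · refine ⟨heq, ?_⟩
      rw [heq] at hy4
      have : (l' : ℤ) * m 0 = (a1 : ℤ) * m 0 := by linarith [heqi, hy4]
      have : (l' : ℤ) = a1 := by
        have hz : (m 0 : ℤ) ≠ 0 := by positivity
        exact mul_right_cancel₀ hz this
      exact_mod_cast this
    · exfalso
      have hmul : ((w' : ℤ) - w) * m n = ((a1 : ℤ) - l') * m 0 := by
        linear_combination heqi - hy4
      have hpos : (0 : ℤ) < ((w' : ℤ) - w) * m n := by
        have h1 : (0 : ℤ) < (w' : ℤ) - w := by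
          have : (w : ℤ) < w' := by exact_mod_cast hgt
          linarith
        have h2 : (0 : ℤ) < (m n : ℤ) := by exact_mod_cast hmn
        positivity
      have hla : (l' : ℤ) < a1 := by
        by_contra hcc
        push_neg at hcc
        have : ((a1 : ℤ) - l') * m 0 ≤ 0 :=
          mul_nonpos_of_nonpos_of_nonneg (by linarith) (by linarith)
        linarith
      apply hv3 (w' - w) (by omega) (by omega)
      have : ((w' - w : ℕ) : ℤ) * m n = ((a1 - l' : ℕ) : ℤ) * m 0 + g 0 := by
        rw [hg0, show ((w' - w : ℕ) : ℤ) = (w' : ℤ) - w by omega,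
          show ((a1 - l' : ℕ) : ℤ) = (a1 : ℤ) - l' by omega]
        linarith [hmul]
      rw [this]
      exact hfor' _ _
  -- second component
  have hzz : z' = z ∧ μ' = μ := by
    have hz'u : z' < u := by omega
    have hSz' := hu.2 z' hz'u
    have hSz := hu.2 z hzu
    rw [hS] at hSz' hSz
    simp only [Set.mem_setOf_eq] at hSz' hSz
    rcases lt_trichotomy μ' μ with hlt | heq | hgt
    · exfalso
      apply hSz'.2
      have : g z' - (m 0 : ℤ) = ((μ - μ' - 1 : ℕ) : ℤ) * m 0 + g z := by
        rw [show ((μ - μ' - 1 : ℕ) : ℤ) = (μ : ℤ) - μ' - 1 by omega]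
        linear_combination hrep2 - hy5
      rw [this]
      exact hΓ'Γ _ (hfor' _ _)
    · refine ⟨?_, heq⟩
      rw [heq] at hy5
      have hgz : g z' = g z := by linarith [hrep2, hy5]
      rcases lt_trichotomy z' z with h | h | h
      · exact absurd (hgmono _ _ h) (by rw [hgz]; exact lt_irrefl _)
      · exact h
      · exact absurd (hgmono _ _ h) (by rw [hgz]; exact lt_irrefl _)
    · exfalso
      apply hSz.2
      have : g z - (m 0 : ℤ) = ((μ' - μ - 1 : ℕ) : ℤ) * m 0 + g z' := by
        rw [show ((μ' - μ - 1 : ℕ) : ℤ) = (μ' : ℤ) - μ - 1 by omega]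
        linear_combination hy5 - hrep2
      rw [this]
      exact hΓ'Γ _ (hfor' _ _)
  obtain ⟨hww1, hww2⟩ := hww
  obtain ⟨hzz1, hzz2⟩ := hzz
  subst hww1 hww2 hzz1 hzz2
  rfl
end

section
/- With the notation of the context, assume ε > 0 or q_z > 0. Then in R = K[x_1, …, x_n] one has the ideal equality inP : (x_n) = inP + J, where J is the ideal generated by the monomials x_i x_p^{q−q_z−ε} x_n^{υ−w−1} for εp + r − r_z ≤ i ≤ p−1, together with x_p^{q−q_z−ε+1} x_n^{υ−w−1} and x_n^{υ−1} (monomials with a negative exponent being omitted). -/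
set_option maxHeartbeats 1000000

/-- The variable `x_i` (for `1 ≤ i ≤ n`) of `K[x_1, …, x_n] = MvPolynomial (Fin n) K`. -/
noncomputable def xv (K : Type*) [Field K] (n : ℕ) [NeZero n] (i : ℕ) : MvPolynomial (Fin n) K :=
  MvPolynomial.X (Fin.ofNat n (i - 1 : ℕ))

/-- The monomial generators of the initial ideal `inP`: `x_i x_p^q` for `r ≤ i ≤ p`;
`x_j x_p^{q−qz−ε} x_n^{v−w}` for `εp + r − rz ≤ j ≤ p`; `x_n^v`; and `x_i x_j` for
`1 ≤ i ≤ j ≤ p−1`. A monomial with a negative exponent is omitted. -/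
noncomputable def inPgens (K : Type*) [Field K] (n : ℕ) [NeZero n] (p q r v w rz ε : ℕ) (qz : ℤ) :
    Set (MvPolynomial (Fin n) K) :=
  {f | ∃ i : ℕ, r ≤ i ∧ i ≤ p ∧ f = xv K n i * xv K n p ^ q} ∪
  {f | ∃ j : ℕ, ε * p + r ≤ j + rz ∧ j ≤ p ∧ qz + ε ≤ (q : ℤ) ∧
    f = xv K n j * xv K n p ^ ((q : ℤ) - qz - ε).toNat * xv K n n ^ (v - w)} ∪
  {xv K n n ^ v} ∪
  {f | ∃ i j : ℕ, 1 ≤ i ∧ i ≤ j ∧ j ≤ p - 1 ∧ f = xv K n i * xv K n j}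

/-- Exponent vector `a·e_{k}` corresponding to `x_k^a`. -/
noncomputable def ee (n : ℕ) [NeZero n] (k a : ℕ) : Fin n →₀ ℕ :=
  Finsupp.single (Fin.ofNat n (k - 1 : ℕ)) a

/-- Exponent-vector version of `inPgens`. -/
def Aset (n p q r v w rz : ℕ) (qz : ℤ) (ε : ℕ) [NeZero n] : Set (Fin n →₀ ℕ) :=
  {s | ∃ i : ℕ, r ≤ i ∧ i ≤ p ∧ s = ee n i 1 + ee n p q} ∪
  {s | ∃ j : ℕ, ε * p + r ≤ j + rz ∧ j ≤ p ∧ qz + ε ≤ (q : ℤ) ∧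
    s = ee n j 1 + ee n p ((q : ℤ) - qz - ε).toNat + ee n n (v - w)} ∪
  {ee n n v} ∪
  {s | ∃ i j : ℕ, 1 ≤ i ∧ i ≤ j ∧ j ≤ p - 1 ∧ s = ee n i 1 + ee n j 1}

/-- Exponent-vector version of the generators of `J`. -/
def Jset (n p q r v w rz : ℕ) (qz : ℤ) (ε : ℕ) [NeZero n] : Set (Fin n →₀ ℕ) :=
  {s | ∃ i : ℕ, ε * p + r ≤ i + rz ∧ i ≤ p - 1 ∧ qz + ε ≤ (q : ℤ) ∧
    s = ee n i 1 + ee n p ((q : ℤ) - qz - ε).toNat + ee n n (v - w - 1)} ∪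
  {s | qz + ε ≤ (q : ℤ) + 1 ∧ s = ee n p ((q : ℤ) - qz - ε + 1).toNat + ee n n (v - w - 1)} ∪
  {ee n n (v - 1)}

private lemma monX {K : Type*} [Field K] {σ : Type*} (a : σ) :
    (MvPolynomial.X a : MvPolynomial σ K) = MvPolynomial.monomial (Finsupp.single a 1) 1 := by
  rw [← MvPolynomial.X_pow_eq_monomial, pow_one]

private lemma hxv1 {K : Type*} [Field K] (n : ℕ) [NeZero n] (k e : ℕ) :
    xv K n k ^ e = MvPolynomial.monomial (ee n k e) 1 := by
  simp only [xv, ee, MvPolynomial.X_pow_eq_monomial]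

private lemma hxv2 {K : Type*} [Field K] (n : ℕ) [NeZero n] (i p e : ℕ) :
    xv K n i * xv K n p ^ e = MvPolynomial.monomial (ee n i 1 + ee n p e) 1 := by
  unfold xv ee
  rw [MvPolynomial.X_pow_eq_monomial, monX]
  simp only [MvPolynomial.monomial_mul, one_mul, mul_one]

private lemma hxv3 {K : Type*} [Field K] (n : ℕ) [NeZero n] (j p e m : ℕ) :
    xv K n j * xv K n p ^ e * xv K n n ^ m =
      MvPolynomial.monomial (ee n j 1 + ee n p e + ee n n m) 1 := by
  unfold xv ee
  rw [MvPolynomial.X_pow_eq_monomial, MvPolynomial.X_pow_eq_monomial, monX]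
  simp only [MvPolynomial.monomial_mul, one_mul, mul_one]

private lemma hxv11 {K : Type*} [Field K] (n : ℕ) [NeZero n] (i j : ℕ) :
    xv K n i * xv K n j = MvPolynomial.monomial (ee n i 1 + ee n j 1) 1 := by
  simp only [xv, ee, monX, MvPolynomial.monomial_mul, one_mul]

private lemma hxv21 {K : Type*} [Field K] (n : ℕ) [NeZero n] (p e m : ℕ) :
    xv K n p ^ e * xv K n n ^ m = MvPolynomial.monomial (ee n p e + ee n n m) 1 := by
  simp only [xv, ee, MvPolynomial.X_pow_eq_monomial, MvPolynomial.monomial_mul, one_mul]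

private lemma hAimg {K : Type*} [Field K] (n p q r v w rz : ℕ) (qz : ℤ) (ε : ℕ) [NeZero n] :
    (fun s => MvPolynomial.monomial s (1 : K)) '' Aset n p q r v w rz qz ε =
      inPgens K n p q r v w rz ε qz := by
  ext f
  simp only [Aset, inPgens, Set.mem_image, Set.mem_union, Set.mem_setOf_eq,
    Set.mem_singleton_iff]
  constructor
  · rintro ⟨s, (((⟨i, h1, h2, rfl⟩ | ⟨j, h1, h2, h3, rfl⟩) | rfl) | ⟨i, j, h1, h2, h3, rfl⟩), rfl⟩
    · exact Or.inl (Or.inl (Or.inl ⟨i, h1, h2, (hxv2 n i p q).symm⟩))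
    · exact Or.inl (Or.inl (Or.inr ⟨j, h1, h2, h3, (hxv3 n j p _ _).symm⟩))
    · exact Or.inl (Or.inr (hxv1 n n v).symm)
    · exact Or.inr ⟨i, j, h1, h2, h3, (hxv11 n i j).symm⟩
  · rintro (((⟨i, h1, h2, rfl⟩ | ⟨j, h1, h2, h3, rfl⟩) | rfl) | ⟨i, j, h1, h2, h3, rfl⟩)
    · exact ⟨_, Or.inl (Or.inl (Or.inl ⟨i, h1, h2, rfl⟩)), (hxv2 n i p q).symm⟩
    · exact ⟨_, Or.inl (Or.inl (Or.inr ⟨j, h1, h2, h3, rfl⟩)), (hxv3 n j p _ _).symm⟩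
    · exact ⟨_, Or.inl (Or.inr rfl), (hxv1 n n v).symm⟩
    · exact ⟨_, Or.inr ⟨i, j, h1, h2, h3, rfl⟩, (hxv11 n i j).symm⟩

private lemma hJimg {K : Type*} [Field K] (n p q r v w rz : ℕ) (qz : ℤ) (ε : ℕ) [NeZero n] :
    (fun s => MvPolynomial.monomial s (1 : K)) '' Jset n p q r v w rz qz ε =
      ({f | ∃ i : ℕ, ε * p + r ≤ i + rz ∧ i ≤ p - 1 ∧ qz + ε ≤ (q : ℤ) ∧
          f = xv K n i * xv K n p ^ ((q : ℤ) - qz - ε).toNat * xv K n n ^ (v - w - 1)} ∪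
        {f | qz + ε ≤ (q : ℤ) + 1 ∧
          f = xv K n p ^ ((q : ℤ) - qz - ε + 1).toNat * xv K n n ^ (v - w - 1)} ∪
        {xv K n n ^ (v - 1)}) := by
  ext f
  simp only [Jset, Set.mem_image, Set.mem_union, Set.mem_setOf_eq, Set.mem_singleton_iff]
  constructor
  · rintro ⟨s, ((⟨i, h1, h2, h3, rfl⟩ | ⟨h1, rfl⟩) | rfl), rfl⟩
    · exact Or.inl (Or.inl ⟨i, h1, h2, h3, (hxv3 n i p _ _).symm⟩)
    · exact Or.inl (Or.inr ⟨h1, (hxv21 n p _ _).symm⟩)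
    · exact Or.inr (hxv1 n n _).symm
  · rintro ((⟨i, h1, h2, h3, rfl⟩ | ⟨h1, rfl⟩) | rfl)
    · exact ⟨_, Or.inl (Or.inl ⟨i, h1, h2, h3, rfl⟩), (hxv3 n i p _ _).symm⟩
    · exact ⟨_, Or.inl (Or.inr ⟨h1, rfl⟩), (hxv21 n p _ _).symm⟩
    · exact ⟨_, Or.inr rfl, (hxv1 n n (v-1)).symm⟩

private lemma stepA {ι : Type*} (σ₀ d : ι →₀ ℕ) (c : ι) (m : ℕ) :
    σ₀ + Finsupp.single c (m + 1) ≤ d + Finsupp.single c 1 ↔ σ₀ + Finsupp.single c m ≤ d := by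
  classical
  simp only [Finsupp.le_def, Finsupp.add_apply]
  constructor <;> intro h k <;> have hh := h k <;> by_cases hk : c = k
  · subst hk; simp only [Finsupp.single_eq_same] at hh ⊢; omega
  · simpa [Finsupp.single_eq_of_ne' hk] using hh
  · subst hk; simp only [Finsupp.single_eq_same] at hh ⊢; omega
  · simpa [Finsupp.single_eq_of_ne' hk] using hh

private lemma stepB {ι : Type*} (σ₀ d : ι →₀ ℕ) (c : ι) (h0 : σ₀ c = 0) :
    σ₀ ≤ d + Finsupp.single c 1 ↔ σ₀ ≤ d := by
  classical
  simp only [Finsupp.le_def, Finsupp.add_apply]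
  constructor <;> intro h k <;> have hh := h k <;> by_cases hk : c = k
  · subst hk; omega
  · simpa [Finsupp.single_eq_of_ne' hk] using hh
  · subst hk; simp only [Finsupp.single_eq_same]; omega
  · simpa [Finsupp.single_eq_of_ne' hk] using hh

private theorem aux {K : Type*} [Field K] (n p : ℕ) [NeZero n] (hn : 2 ≤ n) (hp : p = n - 1)
    (q r v w rz : ℕ) (qz : ℤ) (ε : ℕ)
    (hr1 : 1 ≤ r) (hrp : r ≤ p) (hrzp : rz ≤ p)
    (hε1 : ε ≤ 1) (hεrz : ε = 1 → r ≤ rz)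
    (hkey : qz + ε ≤ (q : ℤ)) (hwv : w < v) :
    (Ideal.span (inPgens K n p q r v w rz ε qz)).colon (Ideal.span {xv K n n}) =
      Ideal.span (inPgens K n p q r v w rz ε qz) ⊔ Ideal.span (
        {f | ∃ i : ℕ, ε * p + r ≤ i + rz ∧ i ≤ p - 1 ∧ qz + ε ≤ (q : ℤ) ∧
          f = xv K n i * xv K n p ^ ((q : ℤ) - qz - ε).toNat * xv K n n ^ (v - w - 1)} ∪
        {f | qz + ε ≤ (q : ℤ) + 1 ∧
          f = xv K n p ^ ((q : ℤ) - qz - ε + 1).toNat * xv K n n ^ (v - w - 1)} ∪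
        {xv K n n ^ (v - 1)}) := by
  classical
  have hp1 : 1 ≤ p := by omega
  set c : Fin n := Fin.ofNat n (n - 1 : ℕ) with hc
  have hxn : xv K n n = MvPolynomial.X c := rfl
  have hee : ∀ a : ℕ, ee n n a = Finsupp.single c a := fun _ => rfl
  have hidx : ∀ k : ℕ, k ≤ p → Fin.ofNat n (k - 1 : ℕ) ≠ c := by
    intro k hk h
    have h1 := congrArg Fin.val h
    simp only [hc, Fin.val_ofNat] at h1
    have hkn : (k - 1) % n = k - 1 := Nat.mod_eq_of_lt (by omega)
    have hnn : (n - 1) % n = n - 1 := Nat.mod_eq_of_lt (by omega)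
    omega
  have hsc : ∀ a b : Fin n, ∀ e₁ e₂ : ℕ, a ≠ c → b ≠ c →
      (Finsupp.single a e₁ + Finsupp.single b e₂) c = 0 := by
    intro a b e₁ e₂ ha hb
    simp [Finsupp.add_apply, Finsupp.single_eq_of_ne' ha, Finsupp.single_eq_of_ne' hb]
  -- key combinatorial equivalences
  have keyfwd : ∀ d : Fin n →₀ ℕ,
      (∃ s ∈ Aset n p q r v w rz qz ε, s ≤ d + Finsupp.single c 1) →
      ∃ t ∈ Aset n p q r v w rz qz ε ∪ Jset n p q r v w rz qz ε, t ≤ d := by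
    rintro d ⟨s, hs, hsd⟩
    simp only [Aset, Set.mem_union, Set.mem_setOf_eq, Set.mem_singleton_iff] at hs
    rcases hs with (((⟨i, h1, h2, rfl⟩ | ⟨j, h1, h2, h3, rfl⟩) | rfl) | ⟨i, j, h1, h2, h3, rfl⟩)
    · refine ⟨_, Set.mem_union_left _
        (Set.mem_union_left _ (Set.mem_union_left _ (Set.mem_union_left _ ⟨i, h1, h2, rfl⟩))), ?_⟩
      exact (stepB _ _ _ (hsc _ _ _ _ (hidx i h2) (hidx p le_rfl))).mp hsd
    · have hvw : v - w = (v - w - 1) + 1 := by omega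
      rw [hee, hvw] at hsd
      have hsd' := (stepA _ _ _ _).mp hsd
      by_cases hjp : j ≤ p - 1
      · exact ⟨_, Set.mem_union_right _
          (Set.mem_union_left _ (Set.mem_union_left _ ⟨j, h1, hjp, h3, rfl⟩)), hsd'⟩
      · have hj : j = p := by omega
        rw [hj] at hsd'
        have he1 : ((q : ℤ) - qz - ε + 1).toNat = 1 + ((q : ℤ) - qz - ε).toNat := by omega
        have hsplit : ee n p ((q : ℤ) - qz - ε + 1).toNat
            = ee n p 1 + ee n p ((q : ℤ) - qz - ε).toNat := by
          rw [he1]; simp only [ee]; exact Finsupp.single_add _ _ _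
        refine ⟨ee n p ((q : ℤ) - qz - ε + 1).toNat + ee n n (v - w - 1),
          Set.mem_union_right _ (Set.mem_union_left _ (Set.mem_union_right _ ⟨by omega, rfl⟩)), ?_⟩
        rw [hsplit, hee]
        exact hsd'
    · have hv' : v = (v - 1) + 1 := by omega
      rw [hee, hv', ← zero_add (Finsupp.single c ((v - 1) + 1))] at hsd
      have hsd' := (stepA _ _ _ _).mp hsd
      rw [zero_add] at hsd'
      exact ⟨_, Set.mem_union_right _ (Set.mem_union_right _ rfl), hsd'⟩
    · refine ⟨_, Set.mem_union_left _ (Set.mem_union_right _ ⟨i, j, h1, h2, h3, rfl⟩), ?_⟩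
      exact (stepB _ _ _ (hsc _ _ _ _ (hidx i (by omega)) (hidx j (by omega)))).mp hsd
  have keybwd : ∀ d : Fin n →₀ ℕ,
      (∃ t ∈ Aset n p q r v w rz qz ε ∪ Jset n p q r v w rz qz ε, t ≤ d) →
      ∃ s ∈ Aset n p q r v w rz qz ε, s ≤ d + Finsupp.single c 1 := by
    rintro d ⟨t, ht, htd⟩
    rcases ht with hA | hJ
    · exact ⟨t, hA, le_trans htd le_self_add⟩
    · simp only [Jset, Set.mem_union, Set.mem_setOf_eq, Set.mem_singleton_iff] at hJ
      have hvw : v - w = (v - w - 1) + 1 := by omega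
      rcases hJ with ((⟨i, h1, h2, h3, rfl⟩ | ⟨h1, rfl⟩) | rfl)
      · refine ⟨ee n i 1 + ee n p ((q : ℤ) - qz - ε).toNat + ee n n (v - w),
          Set.mem_union_left _ (Set.mem_union_left _
            (Set.mem_union_right _ ⟨i, h1, by omega, h3, rfl⟩)), ?_⟩
        rw [hee, hvw]
        exact (stepA _ _ _ _).mpr htd
      · have he1 : ((q : ℤ) - qz - ε + 1).toNat = 1 + ((q : ℤ) - qz - ε).toNat := by omega
        have hsplit : ee n p ((q : ℤ) - qz - ε + 1).toNat
            = ee n p 1 + ee n p ((q : ℤ) - qz - ε).toNat := by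
          rw [he1]; simp only [ee]; exact Finsupp.single_add _ _ _
        have hcond : ε * p + r ≤ p + rz := by
          have hε01 : ε = 0 ∨ ε = 1 := by omega
          rcases hε01 with h | h
          · subst h; omega
          · have := hεrz h; subst h; omega
        refine ⟨ee n p 1 + ee n p ((q : ℤ) - qz - ε).toNat + ee n n (v - w),
          Set.mem_union_left _ (Set.mem_union_left _
            (Set.mem_union_right _ ⟨p, hcond, le_rfl, hkey, rfl⟩)), ?_⟩
        rw [hee, hvw]
        rw [hsplit] at htd
        exact (stepA _ _ _ _).mpr htd
      · refine ⟨ee n n v, Set.mem_union_left _ (Set.mem_union_right _ rfl), ?_⟩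
        have hv' : v = (v - 1) + 1 := by omega
        rw [hee, hv', ← zero_add (Finsupp.single c ((v - 1) + 1))]
        refine (stepA _ _ _ _).mpr ?_
        rw [zero_add]
        exact htd
  -- assemble
  ext x
  rw [Ideal.mem_colon_span_singleton, ← Ideal.span_union,
    show inPgens K n p q r v w rz ε qz ∪
      ({f | ∃ i : ℕ, ε * p + r ≤ i + rz ∧ i ≤ p - 1 ∧ qz + ε ≤ (q : ℤ) ∧
          f = xv K n i * xv K n p ^ ((q : ℤ) - qz - ε).toNat * xv K n n ^ (v - w - 1)} ∪
        {f | qz + ε ≤ (q : ℤ) + 1 ∧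
          f = xv K n p ^ ((q : ℤ) - qz - ε + 1).toNat * xv K n n ^ (v - w - 1)} ∪
        {xv K n n ^ (v - 1)}) =
      (fun s => MvPolynomial.monomial s (1 : K)) ''
        (Aset n p q r v w rz qz ε ∪ Jset n p q r v w rz qz ε) from by
      rw [Set.image_union, hAimg, hJimg],
    ← hAimg n p q r v w rz qz ε, hxn,
    MvPolynomial.mem_ideal_span_monomial_image, MvPolynomial.mem_ideal_span_monomial_image]
  constructor
  · intro h d hd
    refine keyfwd d (h (d + Finsupp.single c 1) ?_)
    rw [MvPolynomial.support_mul_X]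
    exact Finset.mem_map.mpr ⟨d, hd, by simp [addRightEmbedding_apply]⟩
  · intro h d hd
    rw [MvPolynomial.support_mul_X] at hd
    obtain ⟨d₀, hd₀, rfl⟩ := Finset.mem_map.mp hd
    rw [addRightEmbedding_apply]
    exact keybwd d₀ (h d₀ hd₀)

/-- assume `ε > 0` or `qz > 0`. Then in `R = K[x_1, …, x_n]` one has
`inP : (x_n) = inP + J`, where `J` is generated by `x_i x_p^{q−qz−ε} x_n^{v−w−1}` for
`εp + r − rz ≤ i ≤ p−1`, together with `x_p^{q−qz−ε+1} x_n^{v−w−1}` and `x_n^{v−1}`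
(monomials with a negative exponent being omitted). -/
theorem stmt10 {K : Type*} [Field K]
    (n p : ℕ) [NeZero n] (hn : 2 ≤ n) (hp : p = n - 1)
    (m : ℕ → ℕ) (hm0 : 0 < m 0) (hmn : 0 < m n)
    (harith : ∃ d : ℕ, 0 < d ∧ ∀ i < p, m (i + 1) = m i + d)
    (hgcd : ∀ c : ℕ, (∀ i ≤ p, c ∣ m i) → c ∣ m n → c = 1)
    (Γ Γ' : AddSubmonoid ℤ)
    (hΓ : Γ = AddSubmonoid.closure ((fun i => (m i : ℤ)) '' (Set.Iic p ∪ {n})))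
    (hΓ' : Γ' = AddSubmonoid.closure ((fun i => (m i : ℤ)) '' Set.Iic p))
    (hmin : ∀ j ∈ (Set.Iic p ∪ {n} : Set ℕ),
      (m j : ℤ) ∉ AddSubmonoid.closure ((fun i => (m i : ℤ)) '' ((Set.Iic p ∪ {n}) \ {j})))
    (qf : ℕ → ℤ) (rf : ℕ → ℕ)
    (hqr : ∀ t : ℕ, 1 ≤ rf t ∧ rf t ≤ p ∧ (t : ℤ) = qf t * p + rf t)
    (g : ℕ → ℤ) (hg : ∀ t, g t = qf t * m p + m (rf t))
    (S : Set ℤ) (hS : S = {γ : ℤ | γ ∈ Γ ∧ γ - m 0 ∉ Γ})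
    (u : ℕ) (hu : g u ∉ S ∧ ∀ t < u, g t ∈ S)
    (v : ℕ) (hv1 : 1 ≤ v) (hv2 : (v : ℤ) * m n ∈ Γ')
    (hv3 : ∀ b : ℕ, 1 ≤ b → b < v → (b : ℤ) * m n ∉ Γ')
    (w z L mu : ℕ) (hw : w ≤ v - 1) (hz : z ≤ u - 1) (hL : 1 ≤ L)
    (hgu : g u = (L : ℤ) * m 0 + (w : ℤ) * m n)
    (hvmn : (v : ℤ) * m n = (mu : ℤ) * m 0 + g z)
    (q r : ℕ) (hq : (q : ℤ) = qf u) (hr : r = rf u)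
    (ε : ℕ) (hε : ε = if rf z < r then 0 else 1)
    (inP : Ideal (MvPolynomial (Fin n) K))
    (hinP : inP = Ideal.span (inPgens K n p q r v w (rf z) ε (qf z)))
    (hcase : 0 < ε ∨ 0 < qf z) :
    inP.colon (Ideal.span {xv K n n}) =
      inP ⊔ Ideal.span (
        {f | ∃ i : ℕ, ε * p + r ≤ i + rf z ∧ i ≤ p - 1 ∧ qf z + ε ≤ (q : ℤ) ∧
          f = xv K n i * xv K n p ^ ((q : ℤ) - qf z - ε).toNat * xv K n n ^ (v - w - 1)} ∪
        {f | qf z + ε ≤ (q : ℤ) + 1 ∧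
          f = xv K n p ^ ((q : ℤ) - qf z - ε + 1).toNat * xv K n n ^ (v - w - 1)} ∪
        {xv K n n ^ (v - 1)}) := by
  obtain ⟨hru1, hrup, hrueq⟩ := hqr u
  obtain ⟨hrz1, hrzp, hrzeq⟩ := hqr z
  obtain ⟨h01, h0p, h0eq⟩ := hqr 0
  have hp1 : 1 ≤ p := by omega
  have hpz : (0 : ℤ) < (p : ℤ) := by exact_mod_cast hp1
  have h0eq' : (0 : ℤ) = qf 0 * p + (rf 0 : ℤ) := by exact_mod_cast h0eq
  have hrf0p : ((rf 0 : ℕ) : ℤ) ≤ (p : ℤ) := by exact_mod_cast h0p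
  have hrf01 : (1 : ℤ) ≤ ((rf 0 : ℕ) : ℤ) := by exact_mod_cast h01
  have hq0neg : qf 0 < 0 := by
    by_contra hcon
    push_neg at hcon
    have hnn : (0 : ℤ) ≤ qf 0 * p := mul_nonneg hcon (le_of_lt hpz)
    linarith
  have hq0ge : (-1 : ℤ) ≤ qf 0 := by
    have h1 : (-1 : ℤ) * p ≤ qf 0 * p := by nlinarith
    exact le_of_mul_le_mul_right h1 hpz
  have hq0 : qf 0 = -1 := by omega
  have hu1 : 1 ≤ u := by
    rcases Nat.eq_zero_or_pos u with h | h
    · rw [h, hq0] at hq; omega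
    · exact h
  have hzu : z < u := by omega
  have hkey : qf z + ε ≤ (q : ℤ) := by
    have hzu' : (z : ℤ) < (u : ℤ) := by exact_mod_cast hzu
    have hlt : qf z * p + (rf z : ℤ) < (q : ℤ) * p + (rf u : ℤ) := by
      rw [hq, ← hrzeq, ← hrueq]; exact hzu'
    have hr2 : ((rf u : ℕ) : ℤ) ≤ (p : ℤ) := by exact_mod_cast hrup
    have hrz2 : (1 : ℤ) ≤ ((rf z : ℕ) : ℤ) := by exact_mod_cast hrz1
    have hqzle : qf z ≤ (q : ℤ) := by
      by_contra hcon
      push_neg at hcon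
      have h2 : ((q : ℤ) + 1) * p ≤ qf z * p :=
        mul_le_mul_of_nonneg_right (by omega) (le_of_lt hpz)
      rw [add_mul, one_mul] at h2
      linarith
    rcases Nat.lt_or_ge (rf z) r with hcc | hcc
    · have : ε = 0 := by rw [hε, if_pos hcc]
      rw [this]
      simpa using hqzle
    · have hne : qf z ≠ (q : ℤ) := by
        intro heq
        rw [heq] at hlt
        have h3 : ((rf z : ℕ) : ℤ) < ((rf u : ℕ) : ℤ) := by linarith
        have h4 : rf z < rf u := by exact_mod_cast h3
        omega
      have hεe : ε = 1 := by rw [hε, if_neg (by omega)]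
      rw [hεe]
      push_cast
      omega
  have hεrz : ε = 1 → r ≤ rf z := by
    intro h
    rw [hε] at h
    split_ifs at h with hcc
    all_goals omega
  have hε1 : ε ≤ 1 := by rw [hε]; split_ifs <;> omega
  have hwv : w < v := by omega
  rw [hinP]
  exact aux n p hn hp q r v w (rf z) (qf z) ε (by omega) (by omega) hrzp hε1 hεrz hkey hwv
end

section
/- With the notation of the context, assume ε > 0 or q_z > 0, and that q − q_z − ε − 1 ≥ 0. Then for every i with εp + r − r_z ≤ i ≤ p−1, the monomial x_i x_p^{q−q_z−ε−1} x_n^{υ−1} does not belong to the Ratliff-Rush closure of inP; in particular there is no integer m ≥ 1 with x_i x_p^{q−q_z−ε−1} x_n^{υ−1} · (x_i^2)^m ∈ (inP)^{m+1}. -/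
open Pointwise

/-- `nfoldSum E k` is the `(k+1)`-fold pointwise sumset of `E`. -/
def nfoldSum {α : Type*} [AddCommMonoid α] (E : Set α) : ℕ → Set α
  | 0 => E
  | k + 1 => E + nfoldSum E k

theorem aux_img_add {K : Type*} [CommSemiring K] {σ : Type*} (A B : Set (σ →₀ ℕ)) :
    (fun s => MvPolynomial.monomial s (1 : K)) '' (A + B)
      = ((fun s => MvPolynomial.monomial s (1 : K)) '' A) *
        ((fun s => MvPolynomial.monomial s (1 : K)) '' B) := by
  ext f
  constructor
  · rintro ⟨s, hs, rfl⟩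
    rw [Set.mem_add] at hs
    obtain ⟨x, hx, y, hy, rfl⟩ := hs
    exact ⟨_, ⟨x, hx, rfl⟩, _, ⟨y, hy, rfl⟩, by simp [MvPolynomial.monomial_mul]⟩
  · rintro ⟨_, ⟨x, hx, rfl⟩, _, ⟨y, hy, rfl⟩, rfl⟩
    exact ⟨x + y, Set.add_mem_add hx hy, by simp [MvPolynomial.monomial_mul]⟩

theorem aux_span_pow {K : Type*} [CommSemiring K] {σ : Type*} (E : Set (σ →₀ ℕ)) :
    ∀ k : ℕ, Ideal.span ((fun s => MvPolynomial.monomial s (1 : K)) '' E) ^ (k + 1)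
      = Ideal.span ((fun s => MvPolynomial.monomial s (1 : K)) '' nfoldSum E k) := by
  intro k
  induction k with
  | zero => rw [pow_one]; rfl
  | succ k ih =>
    rw [pow_succ', ih, Ideal.span_mul_span', ← aux_img_add]
    rfl

theorem aux_bound {σ : Type*} (E : Set (σ →₀ ℕ)) (d : σ →₀ ℕ) (a : σ)
    (h2 : ∀ s ∈ E, s ≤ d → 2 ≤ s a) :
    ∀ k : ℕ, ∀ s ∈ nfoldSum E k, s ≤ d → 2 * (k + 1) ≤ s a := by
  intro k
  induction k with
  | zero => intro s hs hsd; simpa using h2 s hs hsd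
  | succ k ih =>
    intro s hs hsd
    rw [nfoldSum, Set.mem_add] at hs
    obtain ⟨x, hx, y, hy, rfl⟩ := hs
    have hle := Finsupp.le_def.mp hsd
    have hxd : x ≤ d := Finsupp.le_def.mpr fun j => le_trans (by simp) (hle j)
    have hyd : y ≤ d := Finsupp.le_def.mpr fun j => le_trans (by simp) (hle j)
    have h1 := h2 x hx hxd
    have h3 := ih y hy hyd
    rw [Finsupp.add_apply]
    omega

/-- assume `ε > 0` or `qz > 0`, and `q − qz − ε − 1 ≥ 0`. Then for every `i`
with `εp + r − rz ≤ i ≤ p−1`, the monomial `x_i x_p^{q−qz−ε−1} x_n^{v−1}` is not in the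
Ratliff-Rush closure of `inP`; in particular there is no `m ≥ 1` with
`x_i x_p^{q−qz−ε−1} x_n^{v−1} (x_i^2)^m ∈ (inP)^{m+1}`. -/
theorem stmt12 {K : Type*} [Field K]
    (n p : ℕ) [NeZero n] (hn : 2 ≤ n) (hp : p = n - 1)
    (m : ℕ → ℕ) (hm0 : 0 < m 0) (hmn : 0 < m n)
    (harith : ∃ d : ℕ, 0 < d ∧ ∀ i < p, m (i + 1) = m i + d)
    (hgcd : ∀ c : ℕ, (∀ i ≤ p, c ∣ m i) → c ∣ m n → c = 1)
    (Γ Γ' : AddSubmonoid ℤ)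
    (hΓ : Γ = AddSubmonoid.closure ((fun i => (m i : ℤ)) '' (Set.Iic p ∪ {n})))
    (hΓ' : Γ' = AddSubmonoid.closure ((fun i => (m i : ℤ)) '' Set.Iic p))
    (hmin : ∀ j ∈ (Set.Iic p ∪ {n} : Set ℕ),
      (m j : ℤ) ∉ AddSubmonoid.closure ((fun i => (m i : ℤ)) '' ((Set.Iic p ∪ {n}) \ {j})))
    (qf : ℕ → ℤ) (rf : ℕ → ℕ)
    (hqr : ∀ t : ℕ, 1 ≤ rf t ∧ rf t ≤ p ∧ (t : ℤ) = qf t * p + rf t)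
    (g : ℕ → ℤ) (hg : ∀ t, g t = qf t * m p + m (rf t))
    (S : Set ℤ) (hS : S = {γ : ℤ | γ ∈ Γ ∧ γ - m 0 ∉ Γ})
    (u : ℕ) (hu : g u ∉ S ∧ ∀ t < u, g t ∈ S)
    (v : ℕ) (hv1 : 1 ≤ v) (hv2 : (v : ℤ) * m n ∈ Γ')
    (hv3 : ∀ b : ℕ, 1 ≤ b → b < v → (b : ℤ) * m n ∉ Γ')
    (w z L mu : ℕ) (hw : w ≤ v - 1) (hz : z ≤ u - 1) (hL : 1 ≤ L)
    (hgu : g u = (L : ℤ) * m 0 + (w : ℤ) * m n)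
    (hvmn : (v : ℤ) * m n = (mu : ℤ) * m 0 + g z)
    (q r : ℕ) (hq : (q : ℤ) = qf u) (hr : r = rf u)
    (ε : ℕ) (hε : ε = if rf z < r then 0 else 1)
    (inP : Ideal (MvPolynomial (Fin n) K))
    (hinP : inP = Ideal.span (inPgens K n p q r v w (rf z) ε (qf z)))
    (hcase : 0 < ε ∨ 0 < qf z) (hexp : 0 ≤ (q : ℤ) - qf z - ε - 1) :
    ∀ i : ℕ, ε * p + r ≤ i + rf z → i ≤ p - 1 →
      xv K n i * xv K n p ^ ((q : ℤ) - qf z - ε - 1).toNat * xv K n n ^ (v - 1) ∉ rrSet inP ∧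
      ∀ k : ℕ, 1 ≤ k →
        xv K n i * xv K n p ^ ((q : ℤ) - qf z - ε - 1).toNat * xv K n n ^ (v - 1) *
          (xv K n i ^ 2) ^ k ∉ inP ^ (k + 1) := by
  classical
  intro i hi1 hi2
  obtain ⟨hrz1, hrzp, hzeq⟩ := hqr z
  have hr1 : 1 ≤ r := hr ▸ (hqr u).1
  -- case facts about ε
  have hcases : (rf z < r ∧ ε = 0) ∨ (r ≤ rf z ∧ ε = 1) := by
    by_cases hc : rf z < r
    · exact Or.inl ⟨hc, by rw [hε, if_pos hc]⟩
    · exact Or.inr ⟨by omega, by rw [hε, if_neg hc]⟩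
  have hii : 1 ≤ i := by
    rcases hcases with ⟨h1, h2⟩ | ⟨h1, h2⟩ <;>
      simp only [h2, zero_mul, one_mul, zero_add] at hi1 <;> omega
  have hp2 : 2 ≤ p := by omega
  have hnp : n = p + 1 := by omega
  -- integer facts
  have hppos : (0 : ℤ) < p := by exact_mod_cast (by omega : 0 < p)
  have hqz : -1 ≤ qf z := by
    have h1 : (-1 : ℤ) * p ≤ qf z * p := by
      have h2 : qf z * (p : ℤ) = (z : ℤ) - rf z := by linarith [hzeq]
      rw [h2]
      have : ((rf z : ℤ)) ≤ (p : ℤ) := by exact_mod_cast hrzp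
      have : (0 : ℤ) ≤ (z : ℤ) := Int.natCast_nonneg z
      linarith
    exact le_of_mul_le_mul_right h1 hppos
  have hqεe : (0 : ℤ) ≤ qf z + ε := by
    rcases hcase with h | h <;> omega
  set e := ((q : ℤ) - qf z - ε).toNat with hedef
  set e1 := ((q : ℤ) - qf z - ε - 1).toNat with he1def
  have he : (e : ℤ) = (q : ℤ) - qf z - ε := Int.toNat_of_nonneg (by omega)
  have he1 : (e1 : ℤ) = (q : ℤ) - qf z - ε - 1 := Int.toNat_of_nonneg hexp
  have he11 : e1 = e - 1 ∧ 1 ≤ e ∧ e ≤ q := by omega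
  -- indices
  have hav : (Fin.ofNat n (i - 1 : ℕ)).val = i - 1 := by rw [Fin.val_ofNat]; exact Nat.mod_eq_of_lt (by omega)
  have hbv : (Fin.ofNat n (p - 1 : ℕ)).val = p - 1 := by rw [Fin.val_ofNat]; exact Nat.mod_eq_of_lt (by omega)
  have hcv : (Fin.ofNat n (n - 1 : ℕ)).val = n - 1 := by rw [Fin.val_ofNat]; exact Nat.mod_eq_of_lt (by omega)
  set a : Fin n := (Fin.ofNat n (i - 1 : ℕ)) with ha
  set b : Fin n := (Fin.ofNat n (p - 1 : ℕ)) with hb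
  set c : Fin n := (Fin.ofNat n (n - 1 : ℕ)) with hc
  have hab : a ≠ b := fun h => by have := congrArg Fin.val h; rw [hav, hbv] at this; omega
  have hac : a ≠ c := fun h => by have := congrArg Fin.val h; rw [hav, hcv] at this; omega
  have hbc : b ≠ c := fun h => by have := congrArg Fin.val h; rw [hbv, hcv] at this; omega
  have hxv : ∀ j : ℕ, xv K n j = MvPolynomial.X (Fin.ofNat n (j - 1 : ℕ)) := fun _ => rfl
  -- monomial helpers
  have hX : ∀ x : Fin n, (MvPolynomial.X x : MvPolynomial (Fin n) K)
      = MvPolynomial.monomial (Finsupp.single x 1) 1 := fun x => by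
    rw [← pow_one (MvPolynomial.X x), MvPolynomial.X_pow_eq_monomial]
  have hm2 : ∀ (x y : Fin n) (t : ℕ),
      (MvPolynomial.X x * MvPolynomial.X y ^ t : MvPolynomial (Fin n) K)
        = MvPolynomial.monomial (Finsupp.single x 1 + Finsupp.single y t) 1 := by
    intro x y t
    rw [hX, MvPolynomial.X_pow_eq_monomial, MvPolynomial.monomial_mul, one_mul]
  have hm2' : ∀ x y : Fin n,
      (MvPolynomial.X x * MvPolynomial.X y : MvPolynomial (Fin n) K)
        = MvPolynomial.monomial (Finsupp.single x 1 + Finsupp.single y 1) 1 := by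
    intro x y
    rw [← pow_one (MvPolynomial.X y), hm2]
  have hm3 : ∀ (x y z' : Fin n) (t u' : ℕ),
      (MvPolynomial.X x * MvPolynomial.X y ^ t * MvPolynomial.X z' ^ u'
          : MvPolynomial (Fin n) K)
        = MvPolynomial.monomial
            (Finsupp.single x 1 + Finsupp.single y t + Finsupp.single z' u') 1 := by
    intro x y z' t u'
    rw [hX, MvPolynomial.X_pow_eq_monomial, MvPolynomial.X_pow_eq_monomial,
      MvPolynomial.monomial_mul, MvPolynomial.monomial_mul, one_mul, one_mul]
  -- the exponent set
  set E : Set (Fin n →₀ ℕ) :=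
    {s | ∃ j : ℕ, r ≤ j ∧ j ≤ p ∧
        s = Finsupp.single (Fin.ofNat n (j - 1 : ℕ)) 1 + Finsupp.single b q} ∪
    {s | ∃ j : ℕ, ε * p + r ≤ j + rf z ∧ j ≤ p ∧
        s = Finsupp.single (Fin.ofNat n (j - 1 : ℕ)) 1 + Finsupp.single b e
          + Finsupp.single c (v - w)} ∪
    {Finsupp.single c v} ∪
    {s | ∃ i' j' : ℕ, 1 ≤ i' ∧ i' ≤ j' ∧ j' ≤ p - 1 ∧
        s = Finsupp.single (Fin.ofNat n (i' - 1 : ℕ)) 1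
          + Finsupp.single (Fin.ofNat n (j' - 1 : ℕ)) 1} with hE
  have himg : (fun s => MvPolynomial.monomial s (1 : K)) '' E
      = inPgens K n p q r v w (rf z) ε (qf z) := by
    ext F
    constructor
    · rintro ⟨s, hs, rfl⟩
      rw [hE] at hs
      simp only [Set.mem_union, Set.mem_setOf_eq, Set.mem_singleton_iff] at hs
      rcases hs with ((⟨j, h1, h2, rfl⟩ | ⟨j, h1, h2, rfl⟩) | rfl) | ⟨i', j', h1, h2, h3, rfl⟩
      · exact Or.inl (Or.inl (Or.inl ⟨j, h1, h2, by rw [hxv j, hxv p, hm2, ← hb]⟩))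
      · refine Or.inl (Or.inl (Or.inr ⟨j, h1, h2, by omega, ?_⟩))
        rw [hxv j, hxv p, hxv n, ← hedef, hm3, ← hb, ← hc]
      · refine Or.inl (Or.inr ?_)
        show MvPolynomial.monomial (Finsupp.single c v) (1 : K) = xv K n n ^ v
        rw [hxv n, MvPolynomial.X_pow_eq_monomial, ← hc]
      · exact Or.inr ⟨i', j', h1, h2, h3, by rw [hxv i', hxv j', hm2']⟩
    · intro hF
      rcases hF with ((⟨j, h1, h2, rfl⟩ | ⟨j, h1, h2, _, rfl⟩) | rfl) | ⟨i', j', h1, h2, h3, rfl⟩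
      · refine ⟨Finsupp.single (Fin.ofNat n (j - 1 : ℕ)) 1 + Finsupp.single b q, ?_, ?_⟩
        · rw [hE]; exact Or.inl (Or.inl (Or.inl ⟨j, h1, h2, rfl⟩))
        · show MvPolynomial.monomial _ (1 : K) = _
          rw [hxv j, hxv p, hm2, ← hb]
      · refine ⟨Finsupp.single (Fin.ofNat n (j - 1 : ℕ)) 1 + Finsupp.single b e
            + Finsupp.single c (v - w), ?_, ?_⟩
        · rw [hE]; exact Or.inl (Or.inl (Or.inr ⟨j, h1, h2, rfl⟩))
        · show MvPolynomial.monomial _ (1 : K) = _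
          rw [hxv j, hxv p, hxv n, ← hedef, hm3, ← hb, ← hc]
      · refine ⟨Finsupp.single c v, ?_, ?_⟩
        · rw [hE]; exact Or.inl (Or.inr rfl)
        · show MvPolynomial.monomial _ (1 : K) = _
          rw [hxv n, MvPolynomial.X_pow_eq_monomial, ← hc]
      · refine ⟨Finsupp.single (Fin.ofNat n (i' - 1 : ℕ)) 1
            + Finsupp.single (Fin.ofNat n (j' - 1 : ℕ)) 1, ?_, ?_⟩
        · rw [hE]; exact Or.inr ⟨i', j', h1, h2, h3, rfl⟩
        · show MvPolynomial.monomial _ (1 : K) = _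
          rw [hxv i', hxv j', hm2']
  have hspan : inP = Ideal.span ((fun s => MvPolynomial.monomial s (1 : K)) '' E) := by
    rw [hinP, himg]
  -- Part 2
  have part2 : ∀ k : ℕ, 1 ≤ k →
      xv K n i * xv K n p ^ e1 * xv K n n ^ (v - 1) * (xv K n i ^ 2) ^ k ∉ inP ^ (k + 1) := by
    intro k hk hmem
    set D : Fin n →₀ ℕ :=
      Finsupp.single a (2 * k + 1) + Finsupp.single b e1 + Finsupp.single c (v - 1) with hD
    have hTD : xv K n i * xv K n p ^ e1 * xv K n n ^ (v - 1) * (xv K n i ^ 2) ^ k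
        = MvPolynomial.monomial D (1 : K) := by
      have h0 : xv K n i * xv K n p ^ e1 * xv K n n ^ (v - 1) * (xv K n i ^ 2) ^ k
          = MvPolynomial.X a ^ (2 * k + 1) * MvPolynomial.X b ^ e1
            * MvPolynomial.X c ^ (v - 1) := by
        rw [hxv i, hxv p, hxv n, ← ha, ← hb, ← hc]; ring
      rw [h0, hD]
      rw [MvPolynomial.X_pow_eq_monomial, MvPolynomial.X_pow_eq_monomial,
        MvPolynomial.X_pow_eq_monomial, MvPolynomial.monomial_mul,
        MvPolynomial.monomial_mul, one_mul, one_mul]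
    rw [hspan, hTD, aux_span_pow, MvPolynomial.mem_ideal_span_monomial_image] at hmem
    have hsupp : (MvPolynomial.monomial D (1 : K)).support = {D} := by
      rw [MvPolynomial.support_monomial, if_neg (one_ne_zero)]
    obtain ⟨s, hsE, hsle⟩ := hmem D (by rw [hsupp]; exact Finset.mem_singleton_self D)
    -- key divisibility bound
    have h2 : ∀ t ∈ E, t ≤ D → 2 ≤ t a := by
      intro t ht htle
      have hle := Finsupp.le_def.mp htle
      have hDb : D b = e1 := by
        simp only [hD, Finsupp.add_apply, Finsupp.single_eq_same,
          Finsupp.single_eq_of_ne' hab, Finsupp.single_eq_of_ne' (Ne.symm hbc), zero_add, add_zero]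
      rw [hE] at ht
      simp only [Set.mem_union, Set.mem_setOf_eq, Set.mem_singleton_iff] at ht
      rcases ht with ((⟨j, h1', h2', rfl⟩ | ⟨j, h1', h2', rfl⟩) | rfl) | ⟨i', j', h1', h2', h3', rfl⟩
      · exfalso
        have := hle b
        rw [hDb, Finsupp.add_apply, Finsupp.single_eq_same] at this
        omega
      · exfalso
        have := hle b
        rw [hDb, Finsupp.add_apply, Finsupp.add_apply, Finsupp.single_eq_same,
          Finsupp.single_eq_of_ne' (Ne.symm hbc)] at this
        omega
      · exfalso
        have := hle c
        simp only [hD, Finsupp.add_apply, Finsupp.single_eq_same,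
          Finsupp.single_eq_of_ne' hac, Finsupp.single_eq_of_ne' hbc, zero_add, add_zero] at this
        omega
      · have hne : ∀ j'' : ℕ, 1 ≤ j'' → j'' ≤ p - 1 → (Fin.ofNat n (j'' - 1 : ℕ)) ≠ a →
            D (Fin.ofNat n (j'' - 1 : ℕ)) = 0 := by
          intro j'' hj1 hj2 hja
          have hjv : (Fin.ofNat n (j'' - 1 : ℕ)).val = j'' - 1 := by rw [Fin.val_ofNat]; exact Nat.mod_eq_of_lt (by omega)
          have hjb : (Fin.ofNat n (j'' - 1 : ℕ)) ≠ b := fun h => by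
            have := congrArg Fin.val h; rw [hjv, hbv] at this; omega
          have hjc : (Fin.ofNat n (j'' - 1 : ℕ)) ≠ c := fun h => by
            have := congrArg Fin.val h; rw [hjv, hcv] at this; omega
          simp only [hD, Finsupp.add_apply, Finsupp.single_eq_of_ne' (Ne.symm hja),
            Finsupp.single_eq_of_ne' (Ne.symm hjb), Finsupp.single_eq_of_ne' (Ne.symm hjc),
            add_zero]
        by_cases hia : (Fin.ofNat n (i' - 1 : ℕ)) = a
        · by_cases hja : (Fin.ofNat n (j' - 1 : ℕ)) = a
          · rw [hia, hja, Finsupp.add_apply, Finsupp.single_eq_same]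
          · exfalso
            have h0 := hle (Fin.ofNat n (j' - 1 : ℕ))
            rw [hne j' (by omega) h3' hja, Finsupp.add_apply, Finsupp.single_eq_same] at h0
            omega
        · exfalso
          have h0 := hle (Fin.ofNat n (i' - 1 : ℕ))
          rw [hne i' h1' (by omega) hia, Finsupp.add_apply, Finsupp.single_eq_same] at h0
          omega
    have hbd := aux_bound E D a h2 k s hsE hsle
    have hDa : D a = 2 * k + 1 := by
      simp only [hD, Finsupp.add_apply, Finsupp.single_eq_same,
        Finsupp.single_eq_of_ne' (Ne.symm hab), Finsupp.single_eq_of_ne' (Ne.symm hac), add_zero]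
    have hsa := Finsupp.le_def.mp hsle a
    rw [hDa] at hsa
    omega
  refine ⟨?_, part2⟩
  intro hrr
  rw [rrSet] at hrr
  simp only [Set.mem_iUnion, SetLike.mem_coe, Set.mem_Ici] at hrr
  obtain ⟨k, hk1, hT⟩ := hrr
  have hx2 : xv K n i ^ 2 ∈ inP := by
    rw [hinP]
    exact Ideal.subset_span (Or.inr ⟨i, i, hii, le_rfl, hi2, (pow_two _)⟩)
  have hxk : (xv K n i ^ 2) ^ k ∈ inP ^ k := Ideal.pow_mem_pow hx2 k
  have hmul := Submodule.mem_colon.mp hT _ hxk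
  rw [smul_eq_mul] at hmul
  exact part2 k hk1 hmul
end

section
/- With the notation of the context, assume ε > 0 or q_z > 0, and let χ be the set consisting of the monomials x_i x_p^q x_n^{υ−w−1} for 1 ≤ i ≤ r−1; x_i x_p^{q−1} x_n^{υ−w−1} for r ≤ i ≤ εp + r − r_z − 1, these included only when q_z = 0; x_i x_p^{q−1} x_n^{υ−w−1} for εp + r − ε r_z ≤ i ≤ p−1; and x_i x_p^{q−q_z−ε} x_n^{υ−1} for 1 ≤ i ≤ εp + r − r_z − 1 (monomials with a negative exponent being omitted). Then no monomial of χ belongs to the Ratliff-Rush closure of inP. -/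
open MvPolynomial

section Machinery

variable {σ : Type*} {K : Type*} [Field K] [DecidableEq σ]

/-- Polynomials all of whose monomials are divisible by a product of `k` monomials from `D`. -/
def covSet (K : Type*) [Field K] (D : Set (σ →₀ ℕ)) (k : ℕ) : Set (MvPolynomial σ K) :=
  {f | ∀ e ∈ f.support, ∃ l : List (σ →₀ ℕ), l.length = k ∧ (∀ d ∈ l, d ∈ D) ∧ l.sum ≤ e}

lemma covSet_mul {D : Set (σ →₀ ℕ)} {k1 k2 : ℕ} {f g : MvPolynomial σ K}
    (hf : f ∈ covSet K D k1) (hg : g ∈ covSet K D k2) : f * g ∈ covSet K D (k1 + k2) := by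
  intro e he
  obtain ⟨e1, h1, e2, h2, rfl⟩ := Finset.mem_add.mp (support_mul f g he)
  obtain ⟨l1, hl1, hd1, hs1⟩ := hf e1 h1
  obtain ⟨l2, hl2, hd2, hs2⟩ := hg e2 h2
  refine ⟨l1 ++ l2, by simp [hl1, hl2], ?_, ?_⟩
  · intro d hd
    rcases List.mem_append.mp hd with h | h
    exacts [hd1 d h, hd2 d h]
  · rw [List.sum_append]; exact add_le_add hs1 hs2

/-- `covSet` as an ideal. -/
def covIdeal (K : Type*) [Field K] (D : Set (σ →₀ ℕ)) (k : ℕ) : Ideal (MvPolynomial σ K) where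
  carrier := covSet K D k
  zero_mem' := by intro e he; simp at he
  add_mem' := by
    intro f g hf hg e he
    rcases Finset.mem_union.mp (support_add he) with h | h
    exacts [hf e h, hg e h]
  smul_mem' := by
    intro c f hf e he
    rw [smul_eq_mul] at he
    obtain ⟨e1, h1, e2, h2, rfl⟩ := Finset.mem_add.mp (support_mul c f he)
    obtain ⟨l, hl, hd, hs⟩ := hf e2 h2
    exact ⟨l, hl, hd, le_trans hs le_add_self⟩

lemma span_pow_le_covIdeal {D : Set (σ →₀ ℕ)} {G : Set (MvPolynomial σ K)}
    (hG : ∀ f ∈ G, ∃ d ∈ D, f = monomial d 1) :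
    ∀ k : ℕ, Ideal.span G ^ k ≤ covIdeal K D k := by
  intro k
  induction k with
  | zero =>
      intro f _ e _
      exact ⟨[], rfl, by simp, zero_le⟩
  | succ k ih =>
      rw [pow_succ]
      refine Ideal.mul_le.mpr (fun r hr s hs => ?_)
      have hspan : Ideal.span G ≤ covIdeal K D 1 := by
        rw [Ideal.span_le]
        intro s hsG
        obtain ⟨d, hdD, rfl⟩ := hG s hsG
        show _ ∈ covSet K D 1
        intro e he
        classical
        rw [support_monomial, if_neg (one_ne_zero), Finset.mem_singleton] at he
        exact ⟨[d], rfl, by simpa using hdD, by simp [he]⟩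
      exact covSet_mul (ih hr) (hspan hs)

omit [DecidableEq σ] in
lemma mem_le_sum {l : List (σ →₀ ℕ)} {d : σ →₀ ℕ} (h : d ∈ l) : d ≤ l.sum := by
  induction l with
  | nil => simp at h
  | cons x xs ih =>
      rcases List.mem_cons.mp h with rfl | h
      · exact le_self_add
      · exact le_trans (ih h) le_add_self

omit [DecidableEq σ] in
lemma list_sum_apply' (l : List (σ →₀ ℕ)) (x : σ) : l.sum x = (l.map (fun d => d x)).sum := by
  induction l with
  | nil => simp
  | cons a as ih => simp [Finsupp.add_apply, ih]

omit [DecidableEq σ] in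
lemma list_sum_apply2 (l : List (σ →₀ ℕ)) (x y : σ) :
    (l.map (fun d => d x + d y)).sum = l.sum x + l.sum y := by
  induction l with
  | nil => simp
  | cons a as ih => simp only [List.map_cons, List.sum_cons, ih, List.sum_cons,
      Finsupp.add_apply]; omega

lemma length_mul_le_sum {l : List ℕ} {c : ℕ} (h : ∀ x ∈ l, c ≤ x) : l.length * c ≤ l.sum := by
  induction l with
  | nil => simp
  | cons x xs ih =>
      simp only [List.length_cons, List.sum_cons]
      calc (xs.length + 1) * c = c + xs.length * c := by ring
      _ ≤ x + xs.sum := add_le_add (h x (by simp)) (ih (fun y hy => h y (by simp [hy])))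

end Machinery

section RR

variable {n : ℕ} [NeZero n] {K : Type*} [Field K]

lemma not_mem_rrSet_of {D : Set (Fin n →₀ ℕ)} {G : Set (MvPolynomial (Fin n) K)}
    (hG : ∀ f ∈ G, ∃ d ∈ D, f = monomial d 1)
    {F G0 : Fin n →₀ ℕ} (hg0 : (monomial G0 1 : MvPolynomial (Fin n) K) ∈ G)
    (key : ∀ k : ℕ, 1 ≤ k → ∀ l : List (Fin n →₀ ℕ), l.length = k + 1 →
      (∀ d ∈ l, d ∈ D) → l.sum ≤ F + k • G0 → False) :
    (monomial F 1 : MvPolynomial (Fin n) K) ∉ rrSet (Ideal.span G) := by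
  intro hmem
  rw [rrSet, Set.mem_iUnion₂] at hmem
  obtain ⟨k, hk, hcol⟩ := hmem
  rw [SetLike.mem_coe] at hcol
  have h1 : (monomial F 1 : MvPolynomial (Fin n) K) * (monomial G0 1) ^ k ∈
      Ideal.span G ^ (k + 1) := by
    have := Submodule.mem_colon.mp hcol ((monomial G0 1) ^ k)
      (Ideal.pow_mem_pow (Ideal.subset_span hg0) k)
    simpa [smul_eq_mul] using this
  rw [monomial_pow, monomial_mul, one_pow, one_mul] at h1
  have h2 := span_pow_le_covIdeal hG (k + 1) h1
  have hsup : (F + k • G0) ∈ ((monomial (F + k • G0) 1 : MvPolynomial (Fin n) K)).support := by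
    classical
    rw [support_monomial, if_neg (one_ne_zero)]
    exact Finset.mem_singleton_self _
  obtain ⟨l, hlen, hmemD, hsum⟩ := h2 (F + k • G0) hsup
  exact key k (Set.mem_Ici.mp hk) l hlen hmemD hsum

/-- The coordinate of the variable `x_t`. -/
def av (n : ℕ) [NeZero n] (t : ℕ) : Fin n := Fin.ofNat n (t - 1 : ℕ)

lemma av_ne {s t : ℕ} (hs1 : 1 ≤ s) (hs : s ≤ n) (ht1 : 1 ≤ t) (ht : t ≤ n) (h : s ≠ t) :
    av n s ≠ av n t := by
  intro he
  have h1 : (av n s).val = s - 1 := by rw [av, Fin.val_ofNat, Nat.mod_eq_of_lt (by omega)]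
  have h2 : (av n t).val = t - 1 := by rw [av, Fin.val_ofNat, Nat.mod_eq_of_lt (by omega)]
  rw [he, h2] at h1
  omega

lemma av_ne_last (hn2 : 2 ≤ n) {j : ℕ} (hj : j < n) : av n j ≠ av n n := by
  intro he
  have h1 : (av n j).val = (j - 1) % n := by rw [av, Fin.val_ofNat]
  have h2 : (av n n).val = n - 1 := by rw [av, Fin.val_ofNat, Nat.mod_eq_of_lt (by omega)]
  have h3 : (j - 1) % n ≤ j - 1 := Nat.mod_le _ _
  rw [he, h2] at h1
  omega

lemma X_mul_pow_mon (s t : Fin n) (b : ℕ) :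
    (X s : MvPolynomial (Fin n) K) * X t ^ b =
      monomial (Finsupp.single s 1 + Finsupp.single t b) 1 := by
  rw [← pow_one (X s), X_pow_eq_monomial, X_pow_eq_monomial, monomial_mul, one_mul]

lemma X_mul_pow_pow_mon (s t u : Fin n) (b c : ℕ) :
    (X s : MvPolynomial (Fin n) K) * X t ^ b * X u ^ c =
      monomial (Finsupp.single s 1 + Finsupp.single t b + Finsupp.single u c) 1 := by
  rw [X_mul_pow_mon, X_pow_eq_monomial, monomial_mul, one_mul]

lemma X_mul_X_mon (s t : Fin n) :
    (X s : MvPolynomial (Fin n) K) * X t =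
      monomial (Finsupp.single s 1 + Finsupp.single t 1) 1 := by
  rw [← pow_one (X t), X_mul_pow_mon]

/-- The exponents of the generators of `inP`. -/
def Dset (n : ℕ) [NeZero n] (p q r v w rz ε : ℕ) (qz : ℤ) : Set (Fin n →₀ ℕ) :=
  {d | ∃ i : ℕ, r ≤ i ∧ i ≤ p ∧ d = Finsupp.single (av n i) 1 + Finsupp.single (av n p) q} ∪
  {d | ∃ j : ℕ, ε * p + r ≤ j + rz ∧ j ≤ p ∧ qz + ε ≤ (q : ℤ) ∧
    d = Finsupp.single (av n j) 1 + Finsupp.single (av n p) ((q : ℤ) - qz - ε).toNat +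
      Finsupp.single (av n n) (v - w)} ∪
  {Finsupp.single (av n n) v} ∪
  {d | ∃ i j : ℕ, 1 ≤ i ∧ i ≤ j ∧ j ≤ p - 1 ∧
    d = Finsupp.single (av n i) 1 + Finsupp.single (av n j) 1}

lemma inPgens_monomial (p q r v w rz ε : ℕ) (qz : ℤ) :
    ∀ f ∈ inPgens K n p q r v w rz ε qz, ∃ d ∈ Dset n p q r v w rz ε qz,
      f = monomial d 1 := by
  intro f hf
  simp only [inPgens, Set.mem_union, Set.mem_setOf_eq, Set.mem_singleton_iff] at hf
  rcases hf with (((⟨i, h1, h2, rfl⟩ | ⟨j, h1, h2, h3, rfl⟩) | rfl) | ⟨i, j, h1, h2, h3, rfl⟩)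
  · exact ⟨_, Or.inl (Or.inl (Or.inl ⟨i, h1, h2, rfl⟩)), X_mul_pow_mon _ _ _⟩
  · exact ⟨_, Or.inl (Or.inl (Or.inr ⟨j, h1, h2, h3, rfl⟩)), X_mul_pow_pow_mon _ _ _ _ _⟩
  · exact ⟨_, Or.inl (Or.inr rfl), X_pow_eq_monomial⟩
  · exact ⟨_, Or.inr ⟨i, j, h1, h2, h3, rfl⟩, X_mul_X_mon _ _⟩

end RR

section Cases

variable {n : ℕ} [NeZero n] {K : Type*} [Field K]

lemma caseA {p q r v w rz ε : ℕ} {qz : ℤ} {i : ℕ}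
    (hnp : n = p + 1) (hp1 : 1 ≤ p) (hwv : w < v)
    (hr1 : 1 ≤ r) (hrp : r ≤ p) (hi1 : 1 ≤ i) (hir : i + 1 ≤ r) :
    (monomial (Finsupp.single (av n i) 1 + Finsupp.single (av n p) q +
        Finsupp.single (av n n) (v - w - 1)) 1 : MvPolynomial (Fin n) K)
      ∉ rrSet (Ideal.span (inPgens K n p q r v w rz ε qz)) := by
  have hn2 : 2 ≤ n := by omega
  have hipne : av n i ≠ av n p := av_ne (by omega) (by omega) (by omega) (by omega) (by omega)
  have hinne : av n i ≠ av n n := av_ne_last hn2 (by omega)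
  have hpnne : av n p ≠ av n n := av_ne_last hn2 (by omega)
  refine not_mem_rrSet_of (inPgens_monomial p q r v w rz ε qz)
    (G0 := Finsupp.single (av n p) (q + 1)) ?_ ?_
  · refine Or.inl (Or.inl (Or.inl ⟨p, hrp, le_refl p, ?_⟩))
    rw [show xv K n p = (X (av n p) : MvPolynomial (Fin n) K) from rfl,
      ← pow_succ', X_pow_eq_monomial]
  · intro k hk l hlen hql hsum
    set E := (Finsupp.single (av n i) 1 + Finsupp.single (av n p) q +
        Finsupp.single (av n n) (v - w - 1)) + k • Finsupp.single (av n p) (q + 1) with hE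
    have hEap : E (av n p) = q + k * (q + 1) := by
      simp only [hE, Finsupp.add_apply, Finsupp.smul_apply, Finsupp.single_eq_same,
        Finsupp.single_eq_of_ne' hipne, Finsupp.single_eq_of_ne' (Ne.symm hpnne), smul_eq_mul]
      ring
    have hEan : E (av n n) = v - w - 1 := by
      simp [hE, Finsupp.add_apply, Finsupp.smul_apply, Finsupp.single_eq_same,
        Finsupp.single_eq_of_ne' hinne, Finsupp.single_eq_of_ne' hpnne]
    have hEai : E (av n i) = 1 := by
      simp [hE, Finsupp.add_apply, Finsupp.smul_apply, Finsupp.single_eq_same,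
        Finsupp.single_eq_of_ne' (Ne.symm hipne), Finsupp.single_eq_of_ne' (Ne.symm hinne)]
    have hEoth : ∀ t, 1 ≤ t → t ≤ p → t ≠ i → t ≠ p → E (av n t) = 0 := by
      intro t h1 h2 h3 h4
      have e1 : av n i ≠ av n t := av_ne (by omega) (by omega) (by omega) (by omega) (by omega)
      have e2 : av n p ≠ av n t := av_ne (by omega) (by omega) (by omega) (by omega) (by omega)
      have e3 : av n n ≠ av n t := (av_ne_last hn2 (by omega)).symm
      simp [hE, Finsupp.add_apply, Finsupp.smul_apply, Finsupp.single_eq_of_ne' e1,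
        Finsupp.single_eq_of_ne' e2, Finsupp.single_eq_of_ne' e3]
    have hdleE : ∀ d ∈ l, ∀ x, d x ≤ E x := fun d hd x =>
      le_trans (Finsupp.le_def.mp (mem_le_sum hd) x) (Finsupp.le_def.mp hsum x)
    have hpt : ∀ d ∈ l, q + 1 ≤ d (av n p) := by
      intro d hd
      have hdE := hdleE d hd
      have hD := hql d hd
      simp only [Dset, Set.mem_union, Set.mem_setOf_eq, Set.mem_singleton_iff] at hD
      rcases hD with (((⟨i', h1, h2, hdeq⟩ | ⟨j, h1, h2, h3, hdeq⟩) | hdeq) |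
        ⟨i1, j1, h1, h2, h3, hdeq⟩)
      · by_cases hi'p : i' = p
        · have hd1 : d (av n p) = 1 + q := by
            rw [hdeq, hi'p]
            simp [Finsupp.add_apply, Finsupp.single_eq_same]
          omega
        · have e1 : av n i' ≠ av n p := av_ne (by omega) (by omega) (by omega) (by omega) hi'p
          have hd1 : d (av n i') = 1 := by
            rw [hdeq]
            simp [Finsupp.add_apply, Finsupp.single_eq_same,
              Finsupp.single_eq_of_ne' (Ne.symm e1)]
          have hd2 := hdE (av n i')
          rw [hd1, hEoth i' (by omega) h2 (by omega) hi'p] at hd2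
          omega
      · have e1 : av n j ≠ av n n := av_ne_last hn2 (by omega)
        have hd1 : d (av n n) = v - w := by
          rw [hdeq]
          simp [Finsupp.add_apply, Finsupp.single_eq_same, Finsupp.single_eq_of_ne' e1,
            Finsupp.single_eq_of_ne' hpnne]
        have hd2 := hdE (av n n)
        rw [hd1, hEan] at hd2
        omega
      · have hd1 : d (av n n) = v := by rw [hdeq]; simp
        have hd2 := hdE (av n n)
        rw [hd1, hEan] at hd2
        omega
      · by_cases hi1i : i1 = i
        · by_cases hj1i : j1 = i
          · have hd1 : d (av n i) = 2 := by
              rw [hdeq, hi1i, hj1i]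
              simp [Finsupp.add_apply, Finsupp.single_eq_same]
            have hd2 := hdE (av n i)
            rw [hd1, hEai] at hd2
            omega
          · have hd1 : 1 ≤ d (av n j1) := by
              rw [hdeq]
              simp only [Finsupp.add_apply, Finsupp.single_eq_same]
              omega
            have hd2 := hdE (av n j1)
            rw [hEoth j1 (by omega) (by omega) hj1i (by omega)] at hd2
            omega
        · have hd1 : 1 ≤ d (av n i1) := by
            rw [hdeq]
            simp only [Finsupp.add_apply, Finsupp.single_eq_same]
            omega
          have hd2 := hdE (av n i1)
          rw [hEoth i1 (by omega) (by omega) hi1i (by omega)] at hd2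
          omega
    have h1 : ∀ x ∈ l.map (fun d => d (av n p)), q + 1 ≤ x := by
      intro x hx
      obtain ⟨d, hd, rfl⟩ := List.mem_map.mp hx
      exact hpt d hd
    have h2 := length_mul_le_sum h1
    rw [List.length_map, hlen, ← list_sum_apply'] at h2
    have h3 : l.sum (av n p) ≤ q + k * (q + 1) := hEap ▸ Finsupp.le_def.mp hsum (av n p)
    have h4 : (k + 1) * (q + 1) = k * (q + 1) + (q + 1) := by ring
    omega


lemma caseBC {p q r v w rz ε : ℕ} {qz : ℤ} {i : ℕ}
    (hnp : n = p + 1) (hp1 : 1 ≤ p) (hwv : w < v) (hq1 : 1 ≤ q)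
    (hr1 : 1 ≤ r) (hrp : r ≤ p) (hi1 : 1 ≤ i) (hip : i ≤ p - 1) :
    (monomial (Finsupp.single (av n i) 1 + Finsupp.single (av n p) (q - 1) +
        Finsupp.single (av n n) (v - w - 1)) 1 : MvPolynomial (Fin n) K)
      ∉ rrSet (Ideal.span (inPgens K n p q r v w rz ε qz)) := by
  have hn2 : 2 ≤ n := by omega
  have hipne : av n i ≠ av n p := av_ne (by omega) (by omega) (by omega) (by omega) (by omega)
  have hinne : av n i ≠ av n n := av_ne_last hn2 (by omega)
  have hpnne : av n p ≠ av n n := av_ne_last hn2 (by omega)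
  refine not_mem_rrSet_of (inPgens_monomial p q r v w rz ε qz)
    (G0 := Finsupp.single (av n p) (q + 1)) ?_ ?_
  · refine Or.inl (Or.inl (Or.inl ⟨p, hrp, le_refl p, ?_⟩))
    rw [show xv K n p = (X (av n p) : MvPolynomial (Fin n) K) from rfl,
      ← pow_succ', X_pow_eq_monomial]
  · intro k hk l hlen hql hsum
    set E := (Finsupp.single (av n i) 1 + Finsupp.single (av n p) (q - 1) +
        Finsupp.single (av n n) (v - w - 1)) + k • Finsupp.single (av n p) (q + 1) with hE
    have hEap : E (av n p) = (q - 1) + k * (q + 1) := by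
      simp only [hE, Finsupp.add_apply, Finsupp.smul_apply, Finsupp.single_eq_same,
        Finsupp.single_eq_of_ne' hipne, Finsupp.single_eq_of_ne' (Ne.symm hpnne), smul_eq_mul]
      ring
    have hEan : E (av n n) = v - w - 1 := by
      simp [hE, Finsupp.add_apply, Finsupp.smul_apply, Finsupp.single_eq_same,
        Finsupp.single_eq_of_ne' hinne, Finsupp.single_eq_of_ne' hpnne]
    have hEai : E (av n i) = 1 := by
      simp [hE, Finsupp.add_apply, Finsupp.smul_apply, Finsupp.single_eq_same,
        Finsupp.single_eq_of_ne' (Ne.symm hipne), Finsupp.single_eq_of_ne' (Ne.symm hinne)]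
    have hEoth : ∀ t, 1 ≤ t → t ≤ p → t ≠ i → t ≠ p → E (av n t) = 0 := by
      intro t h1 h2 h3 h4
      have e1 : av n i ≠ av n t := av_ne (by omega) (by omega) (by omega) (by omega) (by omega)
      have e2 : av n p ≠ av n t := av_ne (by omega) (by omega) (by omega) (by omega) (by omega)
      have e3 : av n n ≠ av n t := (av_ne_last hn2 (by omega)).symm
      simp [hE, Finsupp.add_apply, Finsupp.smul_apply, Finsupp.single_eq_of_ne' e1,
        Finsupp.single_eq_of_ne' e2, Finsupp.single_eq_of_ne' e3]
    have hdleE : ∀ d ∈ l, ∀ x, d x ≤ E x := fun d hd x =>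
      le_trans (Finsupp.le_def.mp (mem_le_sum hd) x) (Finsupp.le_def.mp hsum x)
    have hpt : ∀ d ∈ l, q + 1 ≤ d (av n i) + d (av n p) := by
      intro d hd
      have hdE := hdleE d hd
      have hD := hql d hd
      simp only [Dset, Set.mem_union, Set.mem_setOf_eq, Set.mem_singleton_iff] at hD
      rcases hD with (((⟨i', h1, h2, hdeq⟩ | ⟨j, h1, h2, h3, hdeq⟩) | hdeq) |
        ⟨i1, j1, h1, h2, h3, hdeq⟩)
      · by_cases hi'p : i' = p
        · have hd1 : d (av n p) = 1 + q := by
            rw [hdeq, hi'p]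
            simp [Finsupp.add_apply, Finsupp.single_eq_same]
          omega
        · by_cases hi'i : i' = i
          · have hd1 : d (av n i) = 1 := by
              rw [hdeq, hi'i]
              simp [Finsupp.add_apply, Finsupp.single_eq_same,
                Finsupp.single_eq_of_ne' (Ne.symm hipne)]
            have hd2 : d (av n p) = q := by
              rw [hdeq, hi'i]
              simp [Finsupp.add_apply, Finsupp.single_eq_same,
                Finsupp.single_eq_of_ne' hipne]
            omega
          · have e1 : av n i' ≠ av n p := av_ne (by omega) (by omega) (by omega) (by omega) hi'p
            have hd1 : d (av n i') = 1 := by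
              rw [hdeq]
              simp [Finsupp.add_apply, Finsupp.single_eq_same,
                Finsupp.single_eq_of_ne' (Ne.symm e1)]
            have hd2 := hdE (av n i')
            rw [hd1, hEoth i' (by omega) h2 hi'i hi'p] at hd2
            omega
      · have e1 : av n j ≠ av n n := av_ne_last hn2 (by omega)
        have hd1 : d (av n n) = v - w := by
          rw [hdeq]
          simp [Finsupp.add_apply, Finsupp.single_eq_same, Finsupp.single_eq_of_ne' e1,
            Finsupp.single_eq_of_ne' hpnne]
        have hd2 := hdE (av n n)
        rw [hd1, hEan] at hd2
        omega
      · have hd1 : d (av n n) = v := by rw [hdeq]; simp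
        have hd2 := hdE (av n n)
        rw [hd1, hEan] at hd2
        omega
      · by_cases hi1i : i1 = i
        · by_cases hj1i : j1 = i
          · have hd1 : d (av n i) = 2 := by
              rw [hdeq, hi1i, hj1i]
              simp [Finsupp.add_apply, Finsupp.single_eq_same]
            have hd2 := hdE (av n i)
            rw [hd1, hEai] at hd2
            omega
          · have hd1 : 1 ≤ d (av n j1) := by
              rw [hdeq]
              simp only [Finsupp.add_apply, Finsupp.single_eq_same]
              omega
            have hd2 := hdE (av n j1)
            rw [hEoth j1 (by omega) (by omega) hj1i (by omega)] at hd2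
            omega
        · have hd1 : 1 ≤ d (av n i1) := by
            rw [hdeq]
            simp only [Finsupp.add_apply, Finsupp.single_eq_same]
            omega
          have hd2 := hdE (av n i1)
          rw [hEoth i1 (by omega) (by omega) hi1i (by omega)] at hd2
          omega
    have h1 : ∀ x ∈ l.map (fun d => d (av n i) + d (av n p)), q + 1 ≤ x := by
      intro x hx
      obtain ⟨d, hd, rfl⟩ := List.mem_map.mp hx
      exact hpt d hd
    have h2 := length_mul_le_sum h1
    rw [List.length_map, hlen, list_sum_apply2] at h2
    have h3 : l.sum (av n p) ≤ (q - 1) + k * (q + 1) := hEap ▸ Finsupp.le_def.mp hsum (av n p)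
    have h5 : l.sum (av n i) ≤ 1 := hEai ▸ Finsupp.le_def.mp hsum (av n i)
    have h4 : (k + 1) * (q + 1) = k * (q + 1) + (q + 1) := by ring
    omega

lemma caseD {p q r v w rz ε : ℕ} {qz : ℤ} {i : ℕ}
    (hnp : n = p + 1) (hp1 : 1 ≤ p) (hv1 : 1 ≤ v)
    (hr1 : 1 ≤ r) (hrp : r ≤ p) (hi1 : 1 ≤ i) (hip : i ≤ p - 1)
    (hirange : i + rz + 1 ≤ ε * p + r) (hεp : ε * p ≤ p)
    (hQq : ((q : ℤ) - qz - ε).toNat ≤ q)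
    (hlt : ((q : ℤ) - qz - ε).toNat < q ∨ rz = p) :
    (monomial (Finsupp.single (av n i) 1 + Finsupp.single (av n p) ((q : ℤ) - qz - ε).toNat +
        Finsupp.single (av n n) (v - 1)) 1 : MvPolynomial (Fin n) K)
      ∉ rrSet (Ideal.span (inPgens K n p q r v w rz ε qz)) := by
  have hn2 : 2 ≤ n := by omega
  have hipne : av n i ≠ av n p := av_ne (by omega) (by omega) (by omega) (by omega) (by omega)
  have hinne : av n i ≠ av n n := av_ne_last hn2 (by omega)
  have hpnne : av n p ≠ av n n := av_ne_last hn2 (by omega)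
  refine not_mem_rrSet_of (inPgens_monomial p q r v w rz ε qz)
    (G0 := Finsupp.single (av n n) v) ?_ ?_
  · refine Or.inl (Or.inr ?_)
    show _ = xv K n n ^ v
    rw [show xv K n n = (X (av n n) : MvPolynomial (Fin n) K) from rfl, X_pow_eq_monomial]
  · intro k hk l hlen hql hsum
    set E := (Finsupp.single (av n i) 1 + Finsupp.single (av n p) ((q : ℤ) - qz - ε).toNat +
        Finsupp.single (av n n) (v - 1)) + k • Finsupp.single (av n n) v with hE
    have hEap : E (av n p) = ((q : ℤ) - qz - ε).toNat := by
      simp [hE, Finsupp.add_apply, Finsupp.smul_apply, Finsupp.single_eq_same,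
        Finsupp.single_eq_of_ne' hipne, Finsupp.single_eq_of_ne' (Ne.symm hpnne)]
    have hEan : E (av n n) = (v - 1) + k * v := by
      simp only [hE, Finsupp.add_apply, Finsupp.smul_apply, Finsupp.single_eq_same,
        Finsupp.single_eq_of_ne' hinne, Finsupp.single_eq_of_ne' hpnne, smul_eq_mul]
      ring
    have hEai : E (av n i) = 1 := by
      simp [hE, Finsupp.add_apply, Finsupp.smul_apply, Finsupp.single_eq_same,
        Finsupp.single_eq_of_ne' (Ne.symm hipne), Finsupp.single_eq_of_ne' (Ne.symm hinne)]
    have hEoth : ∀ t, 1 ≤ t → t ≤ p → t ≠ i → t ≠ p → E (av n t) = 0 := by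
      intro t h1 h2 h3 h4
      have e1 : av n i ≠ av n t := av_ne (by omega) (by omega) (by omega) (by omega) (by omega)
      have e2 : av n p ≠ av n t := av_ne (by omega) (by omega) (by omega) (by omega) (by omega)
      have e3 : av n n ≠ av n t := (av_ne_last hn2 (by omega)).symm
      simp [hE, Finsupp.add_apply, Finsupp.smul_apply, Finsupp.single_eq_of_ne' e1,
        Finsupp.single_eq_of_ne' e2, Finsupp.single_eq_of_ne' e3]
    have hdleE : ∀ d ∈ l, ∀ x, d x ≤ E x := fun d hd x =>
      le_trans (Finsupp.le_def.mp (mem_le_sum hd) x) (Finsupp.le_def.mp hsum x)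
    have hpt : ∀ d ∈ l, v ≤ d (av n n) := by
      intro d hd
      have hdE := hdleE d hd
      have hD := hql d hd
      simp only [Dset, Set.mem_union, Set.mem_setOf_eq, Set.mem_singleton_iff] at hD
      rcases hD with (((⟨i', h1, h2, hdeq⟩ | ⟨j, h1, h2, h3, hdeq⟩) | hdeq) |
        ⟨i1, j1, h1, h2, h3, hdeq⟩)
      · by_cases hi'p : i' = p
        · have hd1 : d (av n p) = 1 + q := by
            rw [hdeq, hi'p]
            simp [Finsupp.add_apply, Finsupp.single_eq_same]
          have hd2 := hdE (av n p)
          rw [hd1, hEap] at hd2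
          omega
        · by_cases hi'i : i' = i
          · have hd1 : d (av n p) = q := by
              rw [hdeq, hi'i]
              simp [Finsupp.add_apply, Finsupp.single_eq_same,
                Finsupp.single_eq_of_ne' hipne]
            have hd2 := hdE (av n p)
            rw [hd1, hEap] at hd2
            rcases hlt with hlt | hlt
            · omega
            · omega
          · have e1 : av n i' ≠ av n p := av_ne (by omega) (by omega) (by omega) (by omega) hi'p
            have hd1 : d (av n i') = 1 := by
              rw [hdeq]
              simp [Finsupp.add_apply, Finsupp.single_eq_same,
                Finsupp.single_eq_of_ne' (Ne.symm e1)]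
            have hd2 := hdE (av n i')
            rw [hd1, hEoth i' (by omega) h2 hi'i hi'p] at hd2
            omega
      · have hji : i + 1 ≤ j := by omega
        by_cases hjp : j = p
        · have hd1 : d (av n p) = 1 + ((q : ℤ) - qz - ε).toNat := by
            rw [hdeq, hjp]
            simp only [Finsupp.add_apply, Finsupp.single_eq_same,
              Finsupp.single_eq_of_ne' (Ne.symm hpnne), add_zero]
          have hd2 := hdE (av n p)
          rw [hd1, hEap] at hd2
          omega
        · have e1 : av n j ≠ av n p := av_ne (by omega) (by omega) (by omega) (by omega) hjp
          have hd1 : 1 ≤ d (av n j) := by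
            rw [hdeq]
            simp only [Finsupp.add_apply, Finsupp.single_eq_same]
            omega
          have hd2 := hdE (av n j)
          rw [hEoth j (by omega) h2 (by omega) hjp] at hd2
          omega
      · rw [hdeq]
        simp
      · by_cases hi1i : i1 = i
        · by_cases hj1i : j1 = i
          · have hd1 : d (av n i) = 2 := by
              rw [hdeq, hi1i, hj1i]
              simp [Finsupp.add_apply, Finsupp.single_eq_same]
            have hd2 := hdE (av n i)
            rw [hd1, hEai] at hd2
            omega
          · have hd1 : 1 ≤ d (av n j1) := by
              rw [hdeq]
              simp only [Finsupp.add_apply, Finsupp.single_eq_same]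
              omega
            have hd2 := hdE (av n j1)
            rw [hEoth j1 (by omega) (by omega) hj1i (by omega)] at hd2
            omega
        · have hd1 : 1 ≤ d (av n i1) := by
            rw [hdeq]
            simp only [Finsupp.add_apply, Finsupp.single_eq_same]
            omega
          have hd2 := hdE (av n i1)
          rw [hEoth i1 (by omega) (by omega) hi1i (by omega)] at hd2
          omega
    have h1 : ∀ x ∈ l.map (fun d => d (av n n)), v ≤ x := by
      intro x hx
      obtain ⟨d, hd, rfl⟩ := List.mem_map.mp hx
      exact hpt d hd
    have h2 := length_mul_le_sum h1
    rw [List.length_map, hlen, ← list_sum_apply'] at h2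
    have h3 : l.sum (av n n) ≤ (v - 1) + k * v := hEan ▸ Finsupp.le_def.mp hsum (av n n)
    have h4 : (k + 1) * v = k * v + v := by ring
    omega

end Cases

/-- assume `ε > 0` or `qz > 0`, and let `χ` be the indicated set of monomials
(monomials with a negative exponent being omitted). Then no monomial of `χ` belongs to the
Ratliff-Rush closure of `inP`. -/
theorem stmt13 {K : Type*} [Field K]
    (n p : ℕ) [NeZero n] (hn : 2 ≤ n) (hp : p = n - 1)
    (m : ℕ → ℕ) (hm0 : 0 < m 0) (hmn : 0 < m n)
    (harith : ∃ d : ℕ, 0 < d ∧ ∀ i < p, m (i + 1) = m i + d)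
    (hgcd : ∀ c : ℕ, (∀ i ≤ p, c ∣ m i) → c ∣ m n → c = 1)
    (Γ Γ' : AddSubmonoid ℤ)
    (hΓ : Γ = AddSubmonoid.closure ((fun i => (m i : ℤ)) '' (Set.Iic p ∪ {n})))
    (hΓ' : Γ' = AddSubmonoid.closure ((fun i => (m i : ℤ)) '' Set.Iic p))
    (hmin : ∀ j ∈ (Set.Iic p ∪ {n} : Set ℕ),
      (m j : ℤ) ∉ AddSubmonoid.closure ((fun i => (m i : ℤ)) '' ((Set.Iic p ∪ {n}) \ {j})))
    (qf : ℕ → ℤ) (rf : ℕ → ℕ)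
    (hqr : ∀ t : ℕ, 1 ≤ rf t ∧ rf t ≤ p ∧ (t : ℤ) = qf t * p + rf t)
    (g : ℕ → ℤ) (hg : ∀ t, g t = qf t * m p + m (rf t))
    (S : Set ℤ) (hS : S = {γ : ℤ | γ ∈ Γ ∧ γ - m 0 ∉ Γ})
    (u : ℕ) (hu : g u ∉ S ∧ ∀ t < u, g t ∈ S)
    (v : ℕ) (hv1 : 1 ≤ v) (hv2 : (v : ℤ) * m n ∈ Γ')
    (hv3 : ∀ b : ℕ, 1 ≤ b → b < v → (b : ℤ) * m n ∉ Γ')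
    (w z L mu : ℕ) (hw : w ≤ v - 1) (hz : z ≤ u - 1) (hL : 1 ≤ L)
    (hgu : g u = (L : ℤ) * m 0 + (w : ℤ) * m n)
    (hvmn : (v : ℤ) * m n = (mu : ℤ) * m 0 + g z)
    (q r : ℕ) (hq : (q : ℤ) = qf u) (hr : r = rf u)
    (ε : ℕ) (hε : ε = if rf z < r then 0 else 1)
    (inP : Ideal (MvPolynomial (Fin n) K))
    (hinP : inP = Ideal.span (inPgens K n p q r v w (rf z) ε (qf z)))
    (hcase : 0 < ε ∨ 0 < qf z) :
    ∀ f ∈ ({f | ∃ i : ℕ, 1 ≤ i ∧ i + 1 ≤ r ∧ f = xv K n i * xv K n p ^ q * xv K n n ^ (v - w - 1)} ∪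
        {f | ∃ i : ℕ, r ≤ i ∧ i + rf z + 1 ≤ ε * p + r ∧ qf z = 0 ∧ 1 ≤ q ∧
          f = xv K n i * xv K n p ^ (q - 1) * xv K n n ^ (v - w - 1)} ∪
        {f | ∃ i : ℕ, ε * p + r ≤ i + ε * rf z ∧ i ≤ p - 1 ∧ 1 ≤ q ∧
          f = xv K n i * xv K n p ^ (q - 1) * xv K n n ^ (v - w - 1)} ∪
        {f | ∃ i : ℕ, 1 ≤ i ∧ i + rf z + 1 ≤ ε * p + r ∧ qf z + ε ≤ (q : ℤ) ∧
          f = xv K n i * xv K n p ^ ((q : ℤ) - qf z - ε).toNat * xv K n n ^ (v - 1)} : Set (MvPolynomial (Fin n) K)), f ∉ rrSet inP := by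
  intro f hf
  have hp1 : 1 ≤ p := by omega
  have hnp : n = p + 1 := by omega
  have hwv : w < v := by omega
  obtain ⟨hr1u, hrpu, hequ⟩ := hqr u
  have hr1 : 1 ≤ r := hr ▸ hr1u
  have hrp : r ≤ p := hr ▸ hrpu
  obtain ⟨hrz1, hrzp, heqz⟩ := hqr z
  have hεv : (rf z < r ∧ ε = 0) ∨ (r ≤ rf z ∧ ε = 1) := by
    rcases lt_or_ge (rf z) r with h | h
    · left; exact ⟨h, by rw [hε, if_pos h]⟩
    · right; exact ⟨h, by rw [hε, if_neg (not_lt.mpr h)]⟩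
  have hεp : ε * p ≤ p := by
    rcases hεv with ⟨_, h⟩ | ⟨_, h⟩ <;> simp [h]
  have hqz' : 0 ≤ qf z ∨ (qf z = -1 ∧ rf z = p) := by
    rcases le_or_gt 0 (qf z) with h | h
    · exact Or.inl h
    · right
      have hp0 : (0 : ℤ) < p := by exact_mod_cast hp1
      have h1 : qf z ≤ -1 := by omega
      have h2 : qf z * p ≤ (-1) * p := mul_le_mul_of_nonneg_right h1 (le_of_lt hp0)
      have h4 : (rf z : ℤ) ≤ p := by exact_mod_cast hrzp
      have h5 : (0 : ℤ) ≤ z := Int.natCast_nonneg z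
      have h6 : (-1 : ℤ) * p ≤ qf z * p := by
        have : (0 : ℤ) ≤ qf z * p + rf z := heqz ▸ h5
        linarith
      have h7 : qf z * p = (-1) * p := le_antisymm h2 h6
      have h8 : qf z = -1 := mul_right_cancel₀ (ne_of_gt hp0) h7
      refine ⟨h8, ?_⟩
      rw [h8] at heqz
      have : (1 : ℤ) ≤ rf z := by exact_mod_cast hrz1
      have : (z : ℤ) = -p + rf z := by linarith [heqz]
      omega
  rw [hinP]
  simp only [Set.mem_union, Set.mem_setOf_eq] at hf
  rcases hf with ((⟨i, hi1, hir, rfl⟩ | ⟨i, hiR, hirng, hqz0, hq1, rfl⟩) |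
    ⟨i, hlow, hip, hq1, rfl⟩) | ⟨i, hi1, hirange, hqeps, rfl⟩
  · -- case A
    rw [show (xv K n i * xv K n p ^ q * xv K n n ^ (v - w - 1) : MvPolynomial (Fin n) K) =
      MvPolynomial.monomial (Finsupp.single (av n i) 1 + Finsupp.single (av n p) q +
        Finsupp.single (av n n) (v - w - 1)) 1 from X_mul_pow_pow_mon _ _ _ _ _]
    exact caseA hnp hp1 hwv hr1 hrp hi1 hir
  · -- case B
    have hi1 : 1 ≤ i := le_trans hr1 hiR
    have hε1 : ε = 1 := by
      rcases hεv with ⟨_, h⟩ | ⟨_, h⟩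
      · rcases hcase with hc | hc
        · omega
        · rw [hqz0] at hc; exact absurd hc (by norm_num)
      · exact h
    have hip : i ≤ p - 1 := by
      rcases hεv with ⟨h1, h2⟩ | ⟨h1, h2⟩
      · omega
      · simp only [hε1, one_mul] at hirng; omega
    rw [show (xv K n i * xv K n p ^ (q - 1) * xv K n n ^ (v - w - 1) : MvPolynomial (Fin n) K) =
      MvPolynomial.monomial (Finsupp.single (av n i) 1 + Finsupp.single (av n p) (q - 1) +
        Finsupp.single (av n n) (v - w - 1)) 1 from X_mul_pow_pow_mon _ _ _ _ _]
    exact caseBC hnp hp1 hwv hq1 hr1 hrp hi1 hip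
  · -- case C
    have hi1 : 1 ≤ i := by
      rcases hεv with ⟨h1, h2⟩ | ⟨h1, h2⟩
      · simp only [h2, zero_mul, add_zero, zero_add] at hlow
        omega
      · simp only [h2, one_mul] at hlow
        omega
    rw [show (xv K n i * xv K n p ^ (q - 1) * xv K n n ^ (v - w - 1) : MvPolynomial (Fin n) K) =
      MvPolynomial.monomial (Finsupp.single (av n i) 1 + Finsupp.single (av n p) (q - 1) +
        Finsupp.single (av n n) (v - w - 1)) 1 from X_mul_pow_pow_mon _ _ _ _ _]
    exact caseBC hnp hp1 hwv hq1 hr1 hrp hi1 hip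
  · -- case D
    have hip : i ≤ p - 1 := by
      rcases hεv with ⟨h1, h2⟩ | ⟨h1, h2⟩
      · simp only [h2, zero_mul, zero_add] at hirange; omega
      · simp only [h2, one_mul] at hirange; omega
    have hQq : ((q : ℤ) - qf z - ε).toNat ≤ q := by
      rcases hqz' with h | ⟨h1, h2⟩ <;> rcases hcase with hc | hc <;> omega
    have hlt : ((q : ℤ) - qf z - ε).toNat < q ∨ rf z = p := by
      rcases hqz' with h | ⟨h1, h2⟩ <;> rcases hcase with hc | hc <;> omega
    rw [show (xv K n i * xv K n p ^ ((q : ℤ) - qf z - ε).toNat * xv K n n ^ (v - 1) :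
        MvPolynomial (Fin n) K) =
      MvPolynomial.monomial (Finsupp.single (av n i) 1 +
        Finsupp.single (av n p) ((q : ℤ) - qf z - ε).toNat +
        Finsupp.single (av n n) (v - 1)) 1 from X_mul_pow_pow_mon _ _ _ _ _]
    exact caseD hnp hp1 hv1 hr1 hrp hi1 hip hirange hεp hQq hlt
end

section
/- With the notation of the context, assume ε = 0 and q_z = 0, and let χ = {x_i x_p^q x_n^{υ−1} : 1 ≤ i ≤ r − r_z − 1} ∪ {x_i x_p^q x_n^{υ−w−1} : r − r_z ≤ i ≤ r−1}. Then no monomial of χ belongs to the Ratliff-Rush closure of inP. -/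
open MvPolynomial
open Fin.NatCast

lemma span_monomial_pow_le {K : Type*} [Field K] {σ : Type*} (E : Set (σ →₀ ℕ)) (k : ℕ) :
    (Ideal.span ((fun e => monomial e (1 : K)) '' E)) ^ k ≤
      Ideal.span ((fun e => monomial e (1 : K)) ''
        {s | ∃ l : Multiset (σ →₀ ℕ), Multiset.card l = k ∧ (∀ e ∈ l, e ∈ E) ∧ l.sum = s}) := by
  induction k with
  | zero =>
    rw [pow_zero, Ideal.one_eq_top, top_le_iff, Ideal.eq_top_iff_one]
    exact Ideal.subset_span ⟨0, ⟨0, by simp⟩, by simp⟩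
  | succ k ih =>
    rw [pow_succ]
    refine le_trans (Ideal.mul_mono ih le_rfl) ?_
    rw [Ideal.span_mul_span']
    refine Ideal.span_mono ?_
    rintro x ⟨a, ⟨s, ⟨l, hcard, hlE, rfl⟩, rfl⟩, b, ⟨e, heE, rfl⟩, rfl⟩
    refine ⟨l.sum + e, ⟨e ::ₘ l, by simp [hcard], ?_, by simp [add_comm]⟩, ?_⟩
    · intro x hx
      rcases Multiset.mem_cons.mp hx with h | h
      · exact h ▸ heE
      · exact hlE x h
    · simp [monomial_mul]

lemma monomial_mem_span_pow {K : Type*} [Field K] {σ : Type*}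
    {E : Set (σ →₀ ℕ)} {S : Set (MvPolynomial σ K)}
    (hS : S ⊆ (fun e => monomial e (1 : K)) '' E)
    {k : ℕ} {M : σ →₀ ℕ} (h : monomial M (1 : K) ∈ Ideal.span S ^ k) :
    ∃ l : Multiset (σ →₀ ℕ), Multiset.card l = k ∧ (∀ e ∈ l, e ∈ E) ∧ l.sum ≤ M := by
  classical
  have h1 : Ideal.span S ^ k ≤ (Ideal.span ((fun e => monomial e (1 : K)) '' E)) ^ k :=
    Ideal.pow_right_mono (Ideal.span_mono hS) k
  have h2 := span_monomial_pow_le E k (h1 h)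
  have hM : M ∈ (monomial M (1 : K)).support := by
    rw [support_monomial, if_neg one_ne_zero]; exact Finset.mem_singleton_self M
  obtain ⟨s, ⟨l, hcard, hlE, rfl⟩, hle⟩ := mem_ideal_span_monomial_image.mp h2 M hM
  exact ⟨l, hcard, hlE, hle⟩

lemma X_mul_X_pow {K : Type*} [CommSemiring K] {σ : Type*} (a b : σ) (s : ℕ) :
    (X a : MvPolynomial σ K) * X b ^ s =
      monomial (Finsupp.single a 1 + Finsupp.single b s) 1 := by
  rw [← pow_one (X a), X_pow_eq_monomial, X_pow_eq_monomial, monomial_mul, mul_one]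

lemma X_mul_X_pow_mul_X_pow {K : Type*} [CommSemiring K] {σ : Type*} (a b c : σ) (s t : ℕ) :
    (X a : MvPolynomial σ K) * X b ^ s * X c ^ t =
      monomial (Finsupp.single a 1 + Finsupp.single b s + Finsupp.single c t) 1 := by
  rw [X_mul_X_pow, X_pow_eq_monomial, monomial_mul, mul_one]

lemma X_mul_X {K : Type*} [CommSemiring K] {σ : Type*} (a b : σ) :
    (X a : MvPolynomial σ K) * X b =
      monomial (Finsupp.single a 1 + Finsupp.single b 1) 1 := by
  rw [← pow_one (X b), X_mul_X_pow]

/-- assume `ε = 0` and `qz = 0`, and let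
`χ = {x_i x_p^q x_n^{v−1} : 1 ≤ i ≤ r − rz − 1} ∪ {x_i x_p^q x_n^{v−w−1} : r − rz ≤ i ≤ r−1}`.
Then no monomial of `χ` belongs to the Ratliff-Rush closure of `inP`. -/
theorem stmt17 {K : Type*} [Field K]
    (n p : ℕ) [NeZero n] (hn : 2 ≤ n) (hp : p = n - 1)
    (m : ℕ → ℕ) (hm0 : 0 < m 0) (hmn : 0 < m n)
    (harith : ∃ d : ℕ, 0 < d ∧ ∀ i < p, m (i + 1) = m i + d)
    (hgcd : ∀ c : ℕ, (∀ i ≤ p, c ∣ m i) → c ∣ m n → c = 1)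
    (Γ Γ' : AddSubmonoid ℤ)
    (hΓ : Γ = AddSubmonoid.closure ((fun i => (m i : ℤ)) '' (Set.Iic p ∪ {n})))
    (hΓ' : Γ' = AddSubmonoid.closure ((fun i => (m i : ℤ)) '' Set.Iic p))
    (hmin : ∀ j ∈ (Set.Iic p ∪ {n} : Set ℕ),
      (m j : ℤ) ∉ AddSubmonoid.closure ((fun i => (m i : ℤ)) '' ((Set.Iic p ∪ {n}) \ {j})))
    (qf : ℕ → ℤ) (rf : ℕ → ℕ)
    (hqr : ∀ t : ℕ, 1 ≤ rf t ∧ rf t ≤ p ∧ (t : ℤ) = qf t * p + rf t)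
    (g : ℕ → ℤ) (hg : ∀ t, g t = qf t * m p + m (rf t))
    (S : Set ℤ) (hS : S = {γ : ℤ | γ ∈ Γ ∧ γ - m 0 ∉ Γ})
    (u : ℕ) (hu : g u ∉ S ∧ ∀ t < u, g t ∈ S)
    (v : ℕ) (hv1 : 1 ≤ v) (hv2 : (v : ℤ) * m n ∈ Γ')
    (hv3 : ∀ b : ℕ, 1 ≤ b → b < v → (b : ℤ) * m n ∉ Γ')
    (w z L mu : ℕ) (hw : w ≤ v - 1) (hz : z ≤ u - 1) (hL : 1 ≤ L)
    (hgu : g u = (L : ℤ) * m 0 + (w : ℤ) * m n)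
    (hvmn : (v : ℤ) * m n = (mu : ℤ) * m 0 + g z)
    (q r : ℕ) (hq : (q : ℤ) = qf u) (hr : r = rf u)
    (ε : ℕ) (hε : ε = if rf z < r then 0 else 1)
    (inP : Ideal (MvPolynomial (Fin n) K))
    (hinP : inP = Ideal.span (inPgens K n p q r v w (rf z) ε (qf z)))
    (hε0 : ε = 0) (hqz0 : qf z = 0) :
    ∀ f ∈ ({f | ∃ i : ℕ, 1 ≤ i ∧ i + rf z + 1 ≤ r ∧
          f = xv K n i * xv K n p ^ q * xv K n n ^ (v - 1)} ∪
        {f | ∃ i : ℕ, r ≤ i + rf z ∧ i + 1 ≤ r ∧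
          f = xv K n i * xv K n p ^ q * xv K n n ^ (v - w - 1)} : Set (MvPolynomial (Fin n) K)), f ∉ rrSet inP := by
  classical
  rw [hε0, hqz0] at hinP
  obtain ⟨hru1, hrup, -⟩ := hqr u
  obtain ⟨hrz1, hrzp, -⟩ := hqr z
  have hr1 : 1 ≤ r := hr ▸ hru1
  have hrp : r ≤ p := hr ▸ hrup
  have hrzr : rf z < r := by
    by_contra hc
    rw [hε0, if_neg hc] at hε
    exact absurd hε (by decide)
  have hpn : p + 1 = n := by omega
  have hcast : ∀ a b : ℕ, a < n → b < n → (((a : Fin n)) = ((b : Fin n)) ↔ a = b) := by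
    intro a b ha hb
    rw [Fin.ext_iff, Fin.val_cast_of_lt ha, Fin.val_cast_of_lt hb]
  have hne : ∀ a b : ℕ, a < n → b < n → a ≠ b → ((a : Fin n) ≠ (b : Fin n)) :=
    fun a b ha hb hab hh => hab ((hcast a b ha hb).mp hh)
  have key : ∀ (i w' : ℕ), 1 ≤ i → i + 1 ≤ r → w' + 1 ≤ v →
      (r ≤ i + rf z → w' = w) →
      xv K n i * xv K n p ^ q * xv K n n ^ (v - w' - 1) ∉ rrSet inP := by
    intro i w' hi1 hir hw'v hcond hmem
    obtain ⟨k, hk1, hcolon⟩ := Set.mem_iUnion₂.mp hmem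
    rw [Set.mem_Ici] at hk1
    rw [SetLike.mem_coe] at hcolon
    have hxn : xv K n n ^ v ∈ inP := by
      rw [hinP]
      exact Ideal.subset_span (Set.mem_union_left _ (Set.mem_union_right _ rfl))
    have hpowk : (xv K n n ^ v) ^ k ∈ inP ^ k := Ideal.pow_mem_pow hxn k
    have h := Submodule.mem_colon.mp hcolon _ hpowk
    rw [smul_eq_mul] at h
    set M : Fin n →₀ ℕ :=
      Finsupp.single ((i - 1 : ℕ) : Fin n) 1 + Finsupp.single ((p - 1 : ℕ) : Fin n) q +
        Finsupp.single ((n - 1 : ℕ) : Fin n) (v - w' - 1 + v * k) with hMdef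
    have hfM : xv K n i * xv K n p ^ q * xv K n n ^ (v - w' - 1) * (xv K n n ^ v) ^ k =
        monomial M (1 : K) := by
      rw [xv, xv, xv, ← pow_mul, mul_assoc, ← pow_add, X_mul_X_pow_mul_X_pow]; rfl
    rw [hinP, hfM] at h
    -- extract a multiset of exponent vectors
    have hSE : inPgens K n p q r v w (rf z) 0 0 ⊆
        (fun e => monomial e (1 : K)) ''
          ((fun e => monomial e (1 : K)) ⁻¹' inPgens K n p q r v w (rf z) 0 0) := by
      intro gg hgg
      have hex : ∃ e : Fin n →₀ ℕ, monomial e (1 : K) = gg := by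
        rcases hgg with ((⟨a, _, _, rfl⟩ | ⟨j, _, _, _, rfl⟩) | hg3) | ⟨a, b, _, _, _, rfl⟩
        · exact ⟨_, (X_mul_X_pow ((a - 1 : ℕ) : Fin n) ((p - 1 : ℕ) : Fin n) q).symm⟩
        · exact ⟨_, (X_mul_X_pow_mul_X_pow ((j - 1 : ℕ) : Fin n) ((p - 1 : ℕ) : Fin n)
            ((n - 1 : ℕ) : Fin n) _ _).symm⟩
        · rw [Set.mem_singleton_iff] at hg3
          subst hg3
          exact ⟨_, (X_pow_eq_monomial).symm⟩
        · exact ⟨_, (X_mul_X ((a - 1 : ℕ) : Fin n) ((b - 1 : ℕ) : Fin n)).symm⟩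
      obtain ⟨e, he⟩ := hex
      exact ⟨e, show monomial e (1 : K) ∈ _ from he ▸ hgg, he⟩
    obtain ⟨l, hcard, hlE, hlsum⟩ := monomial_mem_span_pow hSE h
    have hlsum' : ∀ c : Fin n, l.sum c ≤ M c := fun c => Finsupp.le_def.mp hlsum c
    have hel : ∀ e ∈ l, ∀ c : Fin n, e c ≤ M c := by
      intro e he c
      refine le_trans ?_ (hlsum' c)
      exact Finsupp.le_def.mp
        (Multiset.single_le_sum (fun x _ => Finsupp.le_def.mpr fun a => Nat.zero_le _) e he) c
    -- coordinates of M
    have hMc : ∀ a : ℕ, a < n → M ((a : ℕ) : Fin n) =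
        (if i - 1 = a then 1 else 0) + (if p - 1 = a then q else 0) +
          (if n - 1 = a then (v - w' - 1 + v * k) else 0) := by
      intro a ha
      simp only [hMdef, Finsupp.add_apply, Finsupp.single_apply,
        hcast (i - 1) a (by omega) ha, hcast (p - 1) a (by omega) ha,
        hcast (n - 1) a (by omega) ha]
    have hMii : M ((i - 1 : ℕ) : Fin n) = 1 := by
      rw [hMc (i - 1) (by omega), if_pos rfl, if_neg (by omega : ¬(p - 1 = i - 1)),
        if_neg (by omega : ¬(n - 1 = i - 1))]
    have hMpp : M ((p - 1 : ℕ) : Fin n) = q := by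
      rw [hMc (p - 1) (by omega), if_neg (by omega : ¬(i - 1 = p - 1)), if_pos rfl,
        if_neg (by omega : ¬(n - 1 = p - 1))]
      omega
    have hMnn : M ((n - 1 : ℕ) : Fin n) = v - w' - 1 + v * k := by
      rw [hMc (n - 1) (by omega), if_neg (by omega : ¬(i - 1 = n - 1)),
        if_neg (by omega : ¬(p - 1 = n - 1)), if_pos rfl]
      omega
    have hM0 : ∀ a : ℕ, a < n → a ≠ i - 1 → a ≠ p - 1 → a ≠ n - 1 →
        M ((a : ℕ) : Fin n) = 0 := by
      intro a ha h1 h2 h3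
      rw [hMc a ha, if_neg (by omega), if_neg (by omega), if_neg (by omega)]
    -- classification of the exponent vectors occurring
    have hshape : ∀ e ∈ l,
        v ≤ e ((n - 1 : ℕ) : Fin n) + w' * e ((i - 1 : ℕ) : Fin n) := by
      intro e he
      have heg : monomial e (1 : K) ∈ inPgens K n p q r v w (rf z) 0 0 := hlE e he
      have hle := hel e he
      rcases heg with ((⟨a, hra, hap, heq⟩ | ⟨j, hrj, hjp, -, heq⟩) | heq3) | ⟨a, b, ha1, hab, hbp, heq⟩
      · -- E1 : x_a x_p^q, r ≤ a ≤ p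
        exfalso
        have hee : e = Finsupp.single ((a - 1 : ℕ) : Fin n) 1 +
            Finsupp.single ((p - 1 : ℕ) : Fin n) q :=
          monomial_left_injective one_ne_zero
            (by show monomial e (1 : K) = _; rw [heq, xv, xv, X_mul_X_pow]; rfl)
        by_cases hap' : a = p
        · have h1 := hle ((p - 1 : ℕ) : Fin n)
          rw [hee, hap', hMpp] at h1
          simp only [Finsupp.add_apply, Finsupp.single_eq_same] at h1
          omega
        · have h1 := hle ((a - 1 : ℕ) : Fin n)
          rw [hM0 (a - 1) (by omega) (by omega) (by omega) (by omega)] at h1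
          rw [hee] at h1
          simp only [Finsupp.add_apply, Finsupp.single_eq_same] at h1
          omega
      · -- E2 : x_j x_p^q x_n^{v-w}, r ≤ j + rz, j ≤ p
        have hrj' : r ≤ j + rf z := by simpa using hrj
        have hj1 : 1 ≤ j := by omega
        have htoq : (((q : ℕ) : ℤ) - 0 - ((0 : ℕ) : ℤ)).toNat = q := by simp
        rw [htoq] at heq
        have hee : e = Finsupp.single ((j - 1 : ℕ) : Fin n) 1 +
            Finsupp.single ((p - 1 : ℕ) : Fin n) q +
            Finsupp.single ((n - 1 : ℕ) : Fin n) (v - w) :=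
          monomial_left_injective one_ne_zero
            (by show monomial e (1 : K) = _; rw [heq, xv, xv, xv, X_mul_X_pow_mul_X_pow]; rfl)
        by_cases hjp' : j = p
        · exfalso
          have h1 := hle ((p - 1 : ℕ) : Fin n)
          rw [hee, hjp', hMpp] at h1
          simp only [Finsupp.add_apply, Finsupp.single_eq_same,
            Finsupp.single_eq_of_ne (hne (n - 1) (p - 1) (by omega) (by omega) (by omega))] at h1
          omega
        by_cases hji : j = i
        · have hw'w : w' = w := hcond (hji ▸ hrj')
          have hYn : e ((n - 1 : ℕ) : Fin n) = v - w := by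
            rw [hee]
            simp only [Finsupp.add_apply, Finsupp.single_eq_same,
              Finsupp.single_eq_of_ne' (hne (j - 1) (n - 1) (by omega) (by omega) (by omega)),
              Finsupp.single_eq_of_ne' (hne (p - 1) (n - 1) (by omega) (by omega) (by omega))]
            omega
          have hYi : e ((i - 1 : ℕ) : Fin n) = 1 := by
            rw [hee, hji]
            simp only [Finsupp.add_apply, Finsupp.single_eq_same,
              Finsupp.single_eq_of_ne' (hne (p - 1) (i - 1) (by omega) (by omega) (by omega)),
              Finsupp.single_eq_of_ne' (hne (n - 1) (i - 1) (by omega) (by omega) (by omega))]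
            omega
          rw [hYn, hYi, hw'w]
          omega
        · exfalso
          have h1 := hle ((j - 1 : ℕ) : Fin n)
          rw [hM0 (j - 1) (by omega) (by omega) (by omega) (by omega)] at h1
          rw [hee] at h1
          simp only [Finsupp.add_apply, Finsupp.single_eq_same] at h1
          omega
      · -- E3 : x_n^v
        rw [Set.mem_singleton_iff] at heq3
        have hee : e = Finsupp.single ((n - 1 : ℕ) : Fin n) v :=
          monomial_left_injective one_ne_zero
            (by show monomial e (1 : K) = _; rw [heq3, xv, X_pow_eq_monomial]; rfl)
        rw [hee]
        simp only [Finsupp.single_eq_same,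
          Finsupp.single_eq_of_ne (hne (n - 1) (i - 1) (by omega) (by omega) (by omega)),
          mul_zero]
        omega
      · -- E4 : x_a x_b, 1 ≤ a ≤ b ≤ p - 1
        exfalso
        have hee : e = Finsupp.single ((a - 1 : ℕ) : Fin n) 1 +
            Finsupp.single ((b - 1 : ℕ) : Fin n) 1 :=
          monomial_left_injective one_ne_zero
            (by show monomial e (1 : K) = _; rw [heq, xv, xv, X_mul_X]; rfl)
        have hb1 : 1 ≤ b := le_trans ha1 hab
        by_cases hai : a = i
        · by_cases hbi : b = i
          · have h1 := hle ((i - 1 : ℕ) : Fin n)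
            rw [hee, hai, hbi, hMii] at h1
            simp only [Finsupp.add_apply, Finsupp.single_eq_same] at h1
            omega
          · have h1 := hle ((b - 1 : ℕ) : Fin n)
            rw [hM0 (b - 1) (by omega) (by omega) (by omega) (by omega)] at h1
            rw [hee] at h1
            simp only [Finsupp.add_apply, Finsupp.single_eq_same] at h1
            omega
        · have h1 := hle ((a - 1 : ℕ) : Fin n)
          rw [hM0 (a - 1) (by omega) (by omega) (by omega) (by omega)] at h1
          rw [hee] at h1
          simp only [Finsupp.add_apply, Finsupp.single_eq_same] at h1
          omega
    -- sum up the lower bounds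
    have hF : ∀ e₁ e₂ : Fin n →₀ ℕ,
        (e₁ + e₂) ((n - 1 : ℕ) : Fin n) + w' * (e₁ + e₂) ((i - 1 : ℕ) : Fin n) =
          (e₁ ((n - 1 : ℕ) : Fin n) + w' * e₁ ((i - 1 : ℕ) : Fin n)) +
          (e₂ ((n - 1 : ℕ) : Fin n) + w' * e₂ ((i - 1 : ℕ) : Fin n)) := by
      intro e₁ e₂
      simp only [Finsupp.add_apply]
      ring
    let Fh : (Fin n →₀ ℕ) →+ ℕ :=
      { toFun := fun e => e ((n - 1 : ℕ) : Fin n) + w' * e ((i - 1 : ℕ) : Fin n)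
        map_zero' := by simp
        map_add' := hF }
    have hsum1 : (l.map (fun _ : (Fin n →₀ ℕ) => v)).sum ≤ (l.map (fun e => Fh e)).sum :=
      Multiset.sum_map_le_sum_map _ _ hshape
    have hsum2 : (l.map (fun _ : (Fin n →₀ ℕ) => v)).sum = (k + 1) * v := by
      rw [Multiset.map_const', Multiset.sum_replicate, hcard, smul_eq_mul]
    have hsum3 : (l.map (fun e => Fh e)).sum = Fh l.sum := (Fh.map_multiset_sum l).symm
    have hsum4 : Fh l.sum ≤ (v - w' - 1 + v * k) + w' * 1 := by
      have : Fh l.sum = l.sum ((n - 1 : ℕ) : Fin n) + w' * l.sum ((i - 1 : ℕ) : Fin n) := rfl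
      rw [this]
      refine Nat.add_le_add ?_ (Nat.mul_le_mul_left _ ?_)
      · exact le_trans (hlsum' _) (le_of_eq hMnn)
      · exact le_trans (hlsum' _) (le_of_eq hMii)
    have hfin : (k + 1) * v ≤ (v - w' - 1 + v * k) + w' * 1 := by
      rw [← hsum2]
      exact le_trans hsum1 (by rw [hsum3]; exact hsum4)
    rw [show (k + 1) * v = v * k + v by ring, mul_one] at hfin
    generalize v * k = t at hfin
    omega
  intro f hf
  rcases hf with ⟨i, hi1, hi2, rfl⟩ | ⟨i, hi1, hi2, rfl⟩
  · have := key i 0 hi1 (by omega) (by omega) (fun hcon => by omega)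
    simpa using this
  · exact key i w (by omega) hi2 (by omega) (fun _ => rfl)
end
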